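/- arXiv:2204.04548 — 4 statements merged into one kernel-verified Lean document; each statement's English description precedes it below -/
import Mathlib

section
/- Let N ≥ 1 be an integer and 0 ≤ α < N, and set γ = 2N + 2 − 2α (so γ > 2) and p defined by 1/p = 1/2 − 1/γ. Then there exists a constant M₀ > 0 depending only on γ such that for every r > 0 and every nonnegative function h ∈ C¹([0,2r]) with h(2r) = 0, one has (∫₀^{2r} h(s)^p s^{γ-1} ds)^{1/p} ≤ M₀ (∫₀^{2r} |h'(s)|² s^{γ-1} ds)^{1/2}. -/
open MeasureTheory Set

private lemma sq_rpow' (x : ℝ) : x ^ (2:ℝ) = x ^ 2 := by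
  rw [show (2:ℝ) = ((2:ℕ):ℝ) by norm_num, Real.rpow_natCast]

private lemma cs_Ioc {a b : ℝ} (f₁ f₂ : ℝ → ℝ)
    (h₁ : ContinuousOn f₁ (Icc a b)) (h₂ : ContinuousOn f₂ (Icc a b))
    (hn₁ : ∀ x ∈ Icc a b, 0 ≤ f₁ x) (hn₂ : ∀ x ∈ Icc a b, 0 ≤ f₂ x) :
    ∫ x in Ioc a b, f₁ x * f₂ x ≤
      (∫ x in Ioc a b, (f₁ x) ^ 2) ^ ((1:ℝ)/2) * (∫ x in Ioc a b, (f₂ x) ^ 2) ^ ((1:ℝ)/2) := by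
  haveI : IsFiniteMeasure (volume.restrict (Ioc a b)) :=
    ⟨by rw [Measure.restrict_apply_univ]; exact measure_Ioc_lt_top⟩
  have hpq : (2:ℝ).HolderConjugate 2 := ⟨by norm_num, by norm_num, by norm_num⟩
  have mem : ∀ (f : ℝ → ℝ), ContinuousOn f (Icc a b) →
      MemLp f (ENNReal.ofReal 2) (volume.restrict (Ioc a b)) := by
    intro f hf
    obtain ⟨C, hC⟩ := isCompact_Icc.exists_bound_of_continuousOn hf
    exact MemLp.of_bound
      ((hf.mono Ioc_subset_Icc_self).aestronglyMeasurable measurableSet_Ioc) C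
      ((ae_restrict_iff' measurableSet_Ioc).2
        (ae_of_all _ fun x hx => hC x (Ioc_subset_Icc_self hx)))
  have H := integral_mul_le_Lp_mul_Lq_of_nonneg hpq
    ((ae_restrict_iff' measurableSet_Ioc).2
      (ae_of_all _ fun x hx => hn₁ x (Ioc_subset_Icc_self hx)))
    ((ae_restrict_iff' measurableSet_Ioc).2
      (ae_of_all _ fun x hx => hn₂ x (Ioc_subset_Icc_self hx)))
    (mem f₁ h₁) (mem f₂ h₂)
  simpa [sq_rpow'] using H

private lemma main_ineq (γ p r : ℝ) (hγ2 : 2 < γ) (hpγ : p * (γ - 2) = 2 * γ) (hr : 0 < r)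
    (h : ℝ → ℝ) (hC1 : ContDiffOn ℝ 1 h (Icc 0 (2*r)))
    (hnn : ∀ s ∈ Icc (0:ℝ) (2*r), 0 ≤ h s) (hz : h (2*r) = 0) :
    (∫ s in Ioc (0:ℝ) (2*r), h s ^ p * s ^ (γ-1)) ^ (1/p)
      ≤ ((p/γ) ^ (2/p) * ((γ-2)⁻¹) ^ ((p-2)/(2*p))) *
        (∫ s in Ioc (0:ℝ) (2*r), (derivWithin h (Icc 0 (2*r)) s) ^ 2 * s ^ (γ-1)) ^ ((1:ℝ)/2) := by
  have hγ0 : 0 < γ := by linarith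
  have hfour : (p - 2) * (γ - 2) = 4 := by ring_nf; ring_nf at hpγ; linarith
  have hp2 : 2 < p := by nlinarith
  have hp0 : 0 < p := by linarith
  have h2r : (0:ℝ) < 2*r := by linarith
  set g : ℝ → ℝ := derivWithin h (Icc 0 (2*r)) with hg
  have hhc : ContinuousOn h (Icc 0 (2*r)) := hC1.continuousOn
  have hgc : ContinuousOn g (Icc 0 (2*r)) :=
    hC1.continuousOn_derivWithin (uniqueDiffOn_Icc h2r) le_rfl
  have hder : ∀ x ∈ Ioo (0:ℝ) (2*r), HasDerivAt h (g x) x := by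
    intro x hx
    exact ((hC1.differentiableOn one_ne_zero x (Ioo_subset_Icc_self hx)).hasDerivWithinAt).hasDerivAt
      (Icc_mem_nhds hx.1 hx.2)
  have hwc : ∀ q : ℝ, 0 ≤ q → ContinuousOn (fun s : ℝ => s ^ q) (Icc 0 (2*r)) := by
    intro q hq
    exact continuousOn_id.rpow_const fun x _ => Or.inr hq
  set D : ℝ := ∫ s in Ioc (0:ℝ) (2*r), (g s) ^ 2 * s ^ (γ-1) with hD
  set X : ℝ := ∫ s in Ioc (0:ℝ) (2*r), h s ^ p * s ^ (γ-1) with hX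
  have hD0 : 0 ≤ D := setIntegral_nonneg measurableSet_Ioc
    fun x hx => mul_nonneg (sq_nonneg _) (Real.rpow_nonneg hx.1.le _)
  have hX0 : 0 ≤ X := setIntegral_nonneg measurableSet_Ioc
    fun x hx => mul_nonneg (Real.rpow_nonneg (hnn x (Ioc_subset_Icc_self hx)) _)
      (Real.rpow_nonneg hx.1.le _)
  have hcD : ContinuousOn (fun s => (g s) ^ 2 * s ^ (γ-1)) (Icc 0 (2*r)) :=
    (hgc.pow 2).mul (hwc _ (by linarith))
  have hcX : ContinuousOn (fun s => h s ^ p * s ^ (γ-1)) (Icc 0 (2*r)) :=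
    (hhc.rpow_const fun x _ => Or.inr hp0.le).mul (hwc _ (by linarith))
  set K : ℝ := (D/(γ-2)) ^ ((1:ℝ)/2) with hK
  have hDγ0 : 0 ≤ D/(γ-2) := div_nonneg hD0 (by linarith)
  have hK0 : 0 ≤ K := Real.rpow_nonneg hDγ0 _
  -- pointwise sup bound
  have hKb : ∀ s : ℝ, 0 < s → s ≤ 2*r → h s * s ^ ((γ-2)/2) ≤ K := by
    intro s hs0 hsle
    have hgint : IntervalIntegrable g volume s (2*r) := by
      apply ContinuousOn.intervalIntegrable
      rw [uIcc_of_le hsle]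
      exact hgc.mono (Icc_subset_Icc hs0.le le_rfl)
    have hFTC : ∫ t in s..(2*r), g t = h (2*r) - h s :=
      intervalIntegral.integral_eq_sub_of_hasDeriv_right_of_le hsle
        (hhc.mono (Icc_subset_Icc hs0.le le_rfl))
        (fun x hx => ((hder x ⟨hs0.trans hx.1, hx.2⟩).hasDerivWithinAt))
        hgint
    have h1 : h s ≤ ∫ t in Ioc s (2*r), |g t| := by
      rw [← intervalIntegral.integral_of_le hsle]
      calc h s = -(∫ t in s..(2*r), g t) := by rw [hFTC, hz]; ring
      _ ≤ |∫ t in s..(2*r), g t| := neg_le_abs _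
      _ ≤ ∫ t in s..(2*r), |g t| := intervalIntegral.abs_integral_le_integral_abs hsle
    have congr1 : ∫ t in Ioc s (2*r), |g t|
        = ∫ t in Ioc s (2*r), (|g t| * t ^ ((γ-1)/2)) * t ^ (-((γ-1)/2)) := by
      apply setIntegral_congr_fun measurableSet_Ioc
      intro t ht
      have ht0 : (0:ℝ) < t := hs0.trans ht.1
      dsimp only
      symm
      rw [mul_assoc, ← Real.rpow_add ht0]
      norm_num
    have hCS := cs_Ioc (a := s) (b := 2*r)
      (fun t => |g t| * t ^ ((γ-1)/2)) (fun t => t ^ (-((γ-1)/2)))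
      (((hgc.mono (Icc_subset_Icc hs0.le le_rfl)).abs).mul
        (continuousOn_id.rpow_const fun x hx => Or.inl (ne_of_gt (lt_of_lt_of_le hs0 hx.1))))
      (continuousOn_id.rpow_const fun x hx => Or.inl (ne_of_gt (lt_of_lt_of_le hs0 hx.1)))
      (fun x hx => mul_nonneg (abs_nonneg _) (Real.rpow_nonneg (hs0.le.trans hx.1) _))
      (fun x hx => Real.rpow_nonneg (hs0.le.trans hx.1) _)
    have hA : ∫ t in Ioc s (2*r), (|g t| * t ^ ((γ-1)/2)) ^ 2 ≤ D := by
      have e1 : ∫ t in Ioc s (2*r), (|g t| * t ^ ((γ-1)/2)) ^ 2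
          = ∫ t in Ioc s (2*r), (g t) ^ 2 * t ^ (γ-1) := by
        apply setIntegral_congr_fun measurableSet_Ioc
        intro t ht
        have ht0 : (0:ℝ) < t := hs0.trans ht.1
        dsimp only
        rw [mul_pow, sq_abs]
        congr 1
        rw [← Real.rpow_natCast (t ^ ((γ-1)/2)) 2, ← Real.rpow_mul ht0.le]
        norm_num
      rw [e1, hD]
      apply setIntegral_mono_set (hcD.integrableOn_Icc.mono_set Ioc_subset_Icc_self)
        ((ae_restrict_iff' measurableSet_Ioc).2 (ae_of_all _ fun x hx =>
          mul_nonneg (sq_nonneg _) (Real.rpow_nonneg hx.1.le _)))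
        (HasSubset.Subset.eventuallyLE (Ioc_subset_Ioc hs0.le le_rfl))
    have hA0 : 0 ≤ ∫ t in Ioc s (2*r), (|g t| * t ^ ((γ-1)/2)) ^ 2 :=
      setIntegral_nonneg measurableSet_Ioc fun x _ => sq_nonneg _
    have hB0 : 0 ≤ ∫ t in Ioc s (2*r), (t ^ (-((γ-1)/2))) ^ 2 :=
      setIntegral_nonneg measurableSet_Ioc fun x _ => sq_nonneg _
    have hB : ∫ t in Ioc s (2*r), (t ^ (-((γ-1)/2))) ^ 2 ≤ s ^ (2-γ) / (γ-2) := by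
      have e1 : ∫ t in Ioc s (2*r), (t ^ (-((γ-1)/2))) ^ 2 = ∫ t in s..(2*r), t ^ (1-γ) := by
        rw [intervalIntegral.integral_of_le hsle]
        apply setIntegral_congr_fun measurableSet_Ioc
        intro t ht
        have ht0 : (0:ℝ) < t := hs0.trans ht.1
        dsimp only
        rw [← Real.rpow_natCast (t ^ (-((γ-1)/2))) 2, ← Real.rpow_mul ht0.le]
        norm_num
      rw [e1, integral_rpow (Or.inr ⟨by intro hc; linarith,
        by rw [Set.uIcc_of_le hsle]; exact fun hc => absurd hc.1 (not_le.2 hs0)⟩)]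
      have e2 : (1-γ) + 1 = 2 - γ := by ring
      rw [e2]
      have h2rpos : (0:ℝ) < (2*r) ^ (2-γ) := Real.rpow_pos_of_pos h2r _
      have e3 : ((2*r) ^ (2-γ) - s ^ (2-γ)) / (2-γ) = (s ^ (2-γ) - (2*r) ^ (2-γ)) / (γ-2) := by
        have hne : γ - 2 ≠ 0 := by linarith
        have hne2 : (2:ℝ) - γ ≠ 0 := by linarith
        field_simp
        ring
      rw [e3]
      exact (div_le_div_iff_of_pos_right (by linarith)).2 (by linarith [h2rpos])
    -- combine
    have hsγ : (0:ℝ) ≤ s ^ (2-γ) / (γ-2) := div_nonneg (Real.rpow_nonneg hs0.le _) (by linarith)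
    have h2 : h s ≤ D ^ ((1:ℝ)/2) * (s ^ (2-γ) / (γ-2)) ^ ((1:ℝ)/2) := by
      calc h s ≤ ∫ t in Ioc s (2*r), |g t| := h1
      _ = ∫ t in Ioc s (2*r), (|g t| * t ^ ((γ-1)/2)) * t ^ (-((γ-1)/2)) := congr1
      _ ≤ (∫ t in Ioc s (2*r), (|g t| * t ^ ((γ-1)/2)) ^ 2) ^ ((1:ℝ)/2) *
          (∫ t in Ioc s (2*r), (t ^ (-((γ-1)/2))) ^ 2) ^ ((1:ℝ)/2) := hCS
      _ ≤ D ^ ((1:ℝ)/2) * (s ^ (2-γ) / (γ-2)) ^ ((1:ℝ)/2) := by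
          apply mul_le_mul (Real.rpow_le_rpow hA0 hA (by norm_num))
            (Real.rpow_le_rpow hB0 hB (by norm_num))
            (Real.rpow_nonneg hB0 _) (Real.rpow_nonneg hD0 _)
    have h3 : h s * s ^ ((γ-2)/2) ≤ (D ^ ((1:ℝ)/2) * (s ^ (2-γ) / (γ-2)) ^ ((1:ℝ)/2)) * s ^ ((γ-2)/2) :=
      mul_le_mul_of_nonneg_right h2 (Real.rpow_nonneg hs0.le _)
    refine h3.trans (le_of_eq ?_)
    rw [hK]
    have hsplit : s ^ ((γ-2)/2) = (s ^ (γ-2)) ^ ((1:ℝ)/2) := by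
      rw [← Real.rpow_mul hs0.le]
      congr 1
      ring
    rw [hsplit, ← Real.mul_rpow hD0 hsγ, ← Real.mul_rpow (mul_nonneg hD0 hsγ) (Real.rpow_nonneg hs0.le _)]
    congr 1
    have hss : s ^ (2-γ) * s ^ (γ-2) = 1 := by
      rw [← Real.rpow_add hs0]
      norm_num
    calc D * (s ^ (2-γ) / (γ-2)) * s ^ (γ-2) = D * (s ^ (2-γ) * s ^ (γ-2)) / (γ-2) := by ring
    _ = D / (γ-2) := by rw [hss, mul_one]
  -- continuity of the two Hölder factors
  have hfc1 : ContinuousOn (fun t : ℝ => |g t| * t ^ ((γ-1)/2)) (Icc 0 (2*r)) :=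
    hgc.abs.mul (hwc _ (by linarith))
  have hfc2 : ContinuousOn (fun t : ℝ => h t ^ (p-1) * t ^ ((γ+1)/2)) (Icc 0 (2*r)) :=
    (hhc.rpow_const fun x _ => Or.inr (by linarith)).mul (hwc _ (by linarith))
  -- integration by parts
  have hibp : γ * X = - ∫ s in Ioc (0:ℝ) (2*r), (g s * p * h s ^ (p-1)) * s ^ γ := by
    have hu : ContinuousOn (fun s => h s ^ p) (uIcc 0 (2*r)) := by
      rw [uIcc_of_le h2r.le]; exact hhc.rpow_const fun x _ => Or.inr hp0.le
    have hv : ContinuousOn (fun s : ℝ => s ^ γ) (uIcc 0 (2*r)) := by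
      rw [uIcc_of_le h2r.le]; exact hwc _ hγ0.le
    have huu : ∀ x ∈ Ioo ((0:ℝ) ⊓ (2*r)) ((0:ℝ) ⊔ (2*r)),
        HasDerivAt (fun s => h s ^ p) (g x * p * h x ^ (p-1)) x := by
      intro x hx
      rw [min_eq_left h2r.le, max_eq_right h2r.le] at hx
      exact (hder x hx).rpow_const (Or.inr (by linarith))
    have hvv : ∀ x ∈ Ioo ((0:ℝ) ⊓ (2*r)) ((0:ℝ) ⊔ (2*r)),
        HasDerivAt (fun s : ℝ => s ^ γ) (γ * x ^ (γ-1)) x := by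
      intro x hx
      rw [min_eq_left h2r.le, max_eq_right h2r.le] at hx
      exact Real.hasDerivAt_rpow_const (Or.inl (ne_of_gt hx.1))
    have hu' : IntervalIntegrable (fun x => g x * p * h x ^ (p-1)) volume 0 (2*r) := by
      apply ContinuousOn.intervalIntegrable
      rw [uIcc_of_le h2r.le]
      exact (hgc.mul continuousOn_const).mul (hhc.rpow_const fun x _ => Or.inr (by linarith))
    have hv' : IntervalIntegrable (fun x : ℝ => γ * x ^ (γ-1)) volume 0 (2*r) := by
      apply ContinuousOn.intervalIntegrable
      rw [uIcc_of_le h2r.le]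
      exact continuousOn_const.mul (hwc _ (by linarith))
    have H := intervalIntegral.integral_mul_deriv_eq_deriv_mul_of_hasDerivAt hu hv huu hvv hu' hv'
    rw [hz, Real.zero_rpow (ne_of_gt hp0), Real.zero_rpow (ne_of_gt hγ0)] at H
    have e1 : ∫ x in (0:ℝ)..(2*r), h x ^ p * (γ * x ^ (γ-1)) = γ * X := by
      rw [hX, ← intervalIntegral.integral_of_le h2r.le, ← intervalIntegral.integral_const_mul]
      apply intervalIntegral.integral_congr
      intro x _
      ring
    rw [e1] at H
    rw [H, ← intervalIntegral.integral_of_le h2r.le]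
    ring
  -- bound the IBP integral by the Hölder product
  have hmono : - ∫ s in Ioc (0:ℝ) (2*r), (g s * p * h s ^ (p-1)) * s ^ γ
      ≤ p * ∫ s in Ioc (0:ℝ) (2*r),
          (|g s| * s ^ ((γ-1)/2)) * (h s ^ (p-1) * s ^ ((γ+1)/2)) := by
    rw [← integral_neg, ← integral_const_mul]
    apply setIntegral_mono_on
    · exact ((((hgc.mul continuousOn_const).mul
        (hhc.rpow_const fun x _ => Or.inr (by linarith))).mul (hwc _ hγ0.le)).neg.integrableOn_Icc).mono_set
        Ioc_subset_Icc_self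
    · exact ((continuousOn_const.mul (hfc1.mul hfc2)).integrableOn_Icc).mono_set Ioc_subset_Icc_self
    · exact measurableSet_Ioc
    · intro x hx
      have hx0 : 0 < x := hx.1
      have hxm : x ∈ Icc (0:ℝ) (2*r) := Ioc_subset_Icc_self hx
      have hhx : 0 ≤ h x := hnn x hxm
      have e : (|g x| * x ^ ((γ-1)/2)) * (h x ^ (p-1) * x ^ ((γ+1)/2))
          = |g x| * h x ^ (p-1) * x ^ γ := by
        have hxx : x ^ ((γ-1)/2) * x ^ ((γ+1)/2) = x ^ γ := by
          rw [← Real.rpow_add hx0]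
          congr 1
          ring
        calc (|g x| * x ^ ((γ-1)/2)) * (h x ^ (p-1) * x ^ ((γ+1)/2))
            = (|g x| * h x ^ (p-1)) * (x ^ ((γ-1)/2) * x ^ ((γ+1)/2)) := by ring
        _ = |g x| * h x ^ (p-1) * x ^ γ := by rw [hxx]
      calc -((g x * p * h x ^ (p-1)) * x ^ γ) = p * ((-g x) * h x ^ (p-1) * x ^ γ) := by ring
      _ ≤ p * (|g x| * h x ^ (p-1) * x ^ γ) := by
          apply mul_le_mul_of_nonneg_left _ hp0.le
          apply mul_le_mul_of_nonneg_right
            (mul_le_mul_of_nonneg_right (neg_le_abs _) (Real.rpow_nonneg hhx _))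
            (Real.rpow_nonneg hx0.le _)
      _ = p * ((|g x| * x ^ ((γ-1)/2)) * (h x ^ (p-1) * x ^ ((γ+1)/2))) := by rw [e]
  -- Hölder
  have hCS2 := cs_Ioc (a := 0) (b := 2*r)
    (fun t => |g t| * t ^ ((γ-1)/2)) (fun t => h t ^ (p-1) * t ^ ((γ+1)/2))
    hfc1 hfc2
    (fun x hx => mul_nonneg (abs_nonneg _) (Real.rpow_nonneg hx.1 _))
    (fun x hx => mul_nonneg (Real.rpow_nonneg (hnn x hx) _) (Real.rpow_nonneg hx.1 _))
  have hf1sq : ∫ t in Ioc (0:ℝ) (2*r), (|g t| * t ^ ((γ-1)/2)) ^ 2 = D := by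
    rw [hD]
    apply setIntegral_congr_fun measurableSet_Ioc
    intro t ht
    dsimp only
    rw [mul_pow, sq_abs]
    congr 1
    rw [← Real.rpow_natCast (t ^ ((γ-1)/2)) 2, ← Real.rpow_mul ht.1.le]
    norm_num
  have hf2sq0 : 0 ≤ ∫ t in Ioc (0:ℝ) (2*r), (h t ^ (p-1) * t ^ ((γ+1)/2)) ^ 2 :=
    setIntegral_nonneg measurableSet_Ioc fun x _ => sq_nonneg _
  have hYX : ∫ t in Ioc (0:ℝ) (2*r), (h t ^ (p-1) * t ^ ((γ+1)/2)) ^ 2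
      ≤ K ^ (p-2) * X := by
    rw [hX, ← integral_const_mul]
    apply setIntegral_mono_on
    · exact ((hfc2.pow 2).integrableOn_Icc).mono_set Ioc_subset_Icc_self
    · exact ((continuousOn_const.mul hcX).integrableOn_Icc).mono_set Ioc_subset_Icc_self
    · exact measurableSet_Ioc
    · intro x hx
      have hx0 : 0 < x := hx.1
      have hxm : x ∈ Icc (0:ℝ) (2*r) := Ioc_subset_Icc_self hx
      have hhx : 0 ≤ h x := hnn x hxm
      have key : (h x ^ (p-1) * x ^ ((γ+1)/2)) ^ 2
          = (h x * x ^ ((γ-2)/2)) ^ (p-2) * (h x ^ p * x ^ (γ-1)) := by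
        rw [mul_pow]
        rw [← Real.rpow_natCast (h x ^ (p-1)) 2, ← Real.rpow_natCast (x ^ ((γ+1)/2)) 2,
          ← Real.rpow_mul hhx, ← Real.rpow_mul hx0.le,
          Real.mul_rpow hhx (Real.rpow_nonneg hx0.le _),
          ← Real.rpow_mul hx0.le,
          show ((γ-2)/2*(p-2) : ℝ) = 2 from by linear_combination hfour / 2]
        have eh : h x ^ (p-2) * h x ^ p = h x ^ ((p-1)*((2:ℕ):ℝ)) := by
          rw [← Real.rpow_add_of_nonneg hhx (by linarith) hp0.le]
          congr 1
          push_cast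
          ring
        have ex : x ^ (2:ℝ) * x ^ (γ-1) = x ^ (((γ+1)/2)*((2:ℕ):ℝ)) := by
          rw [← Real.rpow_add_of_nonneg hx0.le (by norm_num) (by linarith)]
          congr 1
          push_cast
          ring
        calc h x ^ ((p-1)*((2:ℕ):ℝ)) * x ^ (((γ+1)/2)*((2:ℕ):ℝ))
            = (h x ^ (p-2) * h x ^ p) * (x ^ (2:ℝ) * x ^ (γ-1)) := by rw [eh, ex]
        _ = h x ^ (p-2) * x ^ (2:ℝ) * (h x ^ p * x ^ (γ-1)) := by ring
      rw [key]
      apply mul_le_mul_of_nonneg_right _ (mul_nonneg (Real.rpow_nonneg hhx _) (Real.rpow_nonneg hx0.le _))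
      exact Real.rpow_le_rpow (mul_nonneg hhx (Real.rpow_nonneg hx0.le _))
        (hKb x hx0 hx.2) (by linarith)
  -- chain
  have hchain : γ * X ≤ p * (D ^ ((1:ℝ)/2) * (K ^ (p-2) * X) ^ ((1:ℝ)/2)) := by
    rw [hibp]
    refine hmono.trans ?_
    apply mul_le_mul_of_nonneg_left _ hp0.le
    refine hCS2.trans ?_
    rw [hf1sq]
    exact mul_le_mul_of_nonneg_left
      (Real.rpow_le_rpow hf2sq0 hYX (by norm_num)) (Real.rpow_nonneg hD0 _)
  -- solve for X
  have hsplit : (K ^ (p-2) * X) ^ ((1:ℝ)/2) = K ^ ((p-2)/2) * X ^ ((1:ℝ)/2) := by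
    rw [Real.mul_rpow (Real.rpow_nonneg hK0 _) hX0, ← Real.rpow_mul hK0]
    congr 2
    ring
  set c : ℝ := p/γ * (D ^ ((1:ℝ)/2) * K ^ ((p-2)/2)) with hc
  have hc0 : 0 ≤ c := by
    apply mul_nonneg (by positivity)
    exact mul_nonneg (Real.rpow_nonneg hD0 _) (Real.rpow_nonneg hK0 _)
  have hinv0 : (0:ℝ) ≤ (γ-2)⁻¹ := inv_nonneg.2 (by linarith)
  have hXle : X ≤ c * X ^ ((1:ℝ)/2) := by
    rw [hsplit] at hchain
    calc X = (γ * X)/γ := by field_simp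
    _ ≤ (p * (D ^ ((1:ℝ)/2) * (K ^ ((p-2)/2) * X ^ ((1:ℝ)/2))))/γ :=
        (div_le_div_iff_of_pos_right hγ0).2 hchain
    _ = c * X ^ ((1:ℝ)/2) := by rw [hc]; ring
  have hroot : X ^ ((1:ℝ)/2) ≤ c := by
    rcases eq_or_lt_of_le hX0 with h0 | hpos
    · rw [← h0, Real.zero_rpow (by norm_num)]
      exact hc0
    · have hXr : X ^ ((1:ℝ)/2) * X ^ ((1:ℝ)/2) = X := by
        rw [← Real.rpow_add hpos]
        norm_num
      refine le_of_mul_le_mul_right ?_ (Real.rpow_pos_of_pos hpos ((1:ℝ)/2))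
      rw [hXr]
      exact hXle
  have hfinal : X ^ (1/p) ≤ c ^ (2/p) := by
    have h1 : X ^ (1/p) = (X ^ ((1:ℝ)/2)) ^ (2/p) := by
      rw [← Real.rpow_mul hX0]
      congr 1
      field_simp
    rw [h1]
    exact Real.rpow_le_rpow (Real.rpow_nonneg hX0 _) hroot (by positivity)
  refine hfinal.trans (le_of_eq ?_)
  -- compute c ^ (2/p)
  have hKe : K ^ ((p-2)/2) = D ^ ((p-2)/4) * ((γ-2)⁻¹) ^ ((p-2)/4) := by
    rw [hK, ← Real.rpow_mul hDγ0, div_eq_mul_inv D,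
      Real.mul_rpow hD0 hinv0]
    congr 2 <;> ring
  have hDe : D ^ ((1:ℝ)/2) * D ^ ((p-2)/4) = D ^ (p/4) := by
    rw [← Real.rpow_add_of_nonneg hD0 (by norm_num) (by linarith)]
    congr 1
    ring
  have hce : c = p/γ * (D ^ (p/4) * ((γ-2)⁻¹) ^ ((p-2)/4)) := by
    rw [hc, hKe]
    rw [show D ^ ((1:ℝ)/2) * (D ^ ((p-2)/4) * ((γ-2)⁻¹) ^ ((p-2)/4))
        = (D ^ ((1:ℝ)/2) * D ^ ((p-2)/4)) * ((γ-2)⁻¹) ^ ((p-2)/4) from by ring, hDe]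
  rw [hce]
  rw [Real.mul_rpow (by positivity) (mul_nonneg (Real.rpow_nonneg hD0 _) (Real.rpow_nonneg hinv0 _)),
    Real.mul_rpow (Real.rpow_nonneg hD0 _) (Real.rpow_nonneg hinv0 _),
    ← Real.rpow_mul hD0, ← Real.rpow_mul hinv0,
    show (p/4*(2/p) : ℝ) = 1/2 from by field_simp; ring,
    show ((p-2)/4*(2/p) : ℝ) = (p-2)/(2*p) from by field_simp; ring]
  ring

theorem stmt_1 (N : ℕ) (hN : 1 ≤ N) (α : ℝ) (hα0 : 0 ≤ α) (hαN : α < N)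
    (γ p : ℝ) (hγ : γ = 2 * N + 2 - 2 * α) (hp : 1 / p = 1 / 2 - 1 / γ) :
    ∃ M₀ > (0 : ℝ), ∀ r > (0 : ℝ), ∀ h : ℝ → ℝ,
      ContDiffOn ℝ 1 h (Icc 0 (2 * r)) →
      (∀ s ∈ Icc (0 : ℝ) (2 * r), 0 ≤ h s) →
      h (2 * r) = 0 →
      (∫⁻ s in Ioo (0 : ℝ) (2 * r), ENNReal.ofReal (h s ^ p * s ^ (γ - 1))) ^ (1 / p)
        ≤ ENNReal.ofReal M₀ *
          (∫⁻ s in Ioo (0 : ℝ) (2 * r),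
              ENNReal.ofReal ((derivWithin h (Icc 0 (2 * r)) s) ^ 2 * s ^ (γ - 1)))
            ^ ((1 : ℝ) / 2) := by
  have hN1 : (1:ℝ) ≤ N := by exact_mod_cast hN
  have hαN' : α < (N:ℝ) := hαN
  have hγ2 : 2 < γ := by rw [hγ]; linarith
  have hγ0 : 0 < γ := by linarith
  have h1p : 0 < 1/p := by
    rw [hp, sub_pos]
    exact one_div_lt_one_div_of_lt (by norm_num) hγ2
  have hp0 : 0 < p := by
    by_contra hle
    push_neg at hle
    have : 1/p ≤ 0 := div_nonpos_of_nonneg_of_nonpos (by norm_num) hle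
    linarith
  have hpγ : p * (γ - 2) = 2 * γ := by
    have hpne : p ≠ 0 := ne_of_gt hp0
    have hγne : γ ≠ 0 := ne_of_gt hγ0
    field_simp at hp
    ring_nf at hp ⊢
    linarith
  refine ⟨(p/γ) ^ (2/p) * ((γ-2)⁻¹) ^ ((p-2)/(2*p)),
    mul_pos (Real.rpow_pos_of_pos (by positivity) _)
      (Real.rpow_pos_of_pos (inv_pos.2 (by linarith)) _), ?_⟩
  intro r hr h hC1 hnn hz
  have h2r : (0:ℝ) < 2*r := by linarith
  have hIoo : (volume : Measure ℝ).restrict (Ioo (0:ℝ) (2*r))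
      = volume.restrict (Ioc (0:ℝ) (2*r)) :=
    Measure.restrict_congr_set Ioo_ae_eq_Ioc
  rw [hIoo]
  have hwc : ∀ q : ℝ, 0 ≤ q → ContinuousOn (fun s : ℝ => s ^ q) (Icc 0 (2*r)) := by
    intro q hq
    exact continuousOn_id.rpow_const fun x _ => Or.inr hq
  have hXint : IntegrableOn (fun s => h s ^ p * s ^ (γ-1)) (Ioc 0 (2*r)) :=
    (((hC1.continuousOn.rpow_const fun x _ => Or.inr hp0.le).mul
      (hwc _ (by linarith))).integrableOn_Icc).mono_set Ioc_subset_Icc_self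
  have hDint : IntegrableOn (fun s => (derivWithin h (Icc 0 (2*r)) s) ^ 2 * s ^ (γ-1))
      (Ioc 0 (2*r)) :=
    ((((hC1.continuousOn_derivWithin (uniqueDiffOn_Icc h2r) le_rfl).pow 2).mul
      (hwc _ (by linarith))).integrableOn_Icc).mono_set Ioc_subset_Icc_self
  rw [← ofReal_integral_eq_lintegral_ofReal hXint
      ((ae_restrict_iff' measurableSet_Ioc).2 (ae_of_all _ fun x hx =>
        mul_nonneg (Real.rpow_nonneg (hnn x (Ioc_subset_Icc_self hx)) _)
          (Real.rpow_nonneg hx.1.le _))),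
    ← ofReal_integral_eq_lintegral_ofReal hDint
      ((ae_restrict_iff' measurableSet_Ioc).2 (ae_of_all _ fun x hx =>
        mul_nonneg (sq_nonneg _) (Real.rpow_nonneg hx.1.le _)))]
  have hX0 : 0 ≤ ∫ s in Ioc (0:ℝ) (2*r), h s ^ p * s ^ (γ-1) :=
    setIntegral_nonneg measurableSet_Ioc fun x hx =>
      mul_nonneg (Real.rpow_nonneg (hnn x (Ioc_subset_Icc_self hx)) _)
        (Real.rpow_nonneg hx.1.le _)
  have hD0 : 0 ≤ ∫ s in Ioc (0:ℝ) (2*r), (derivWithin h (Icc 0 (2*r)) s) ^ 2 * s ^ (γ-1) :=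
    setIntegral_nonneg measurableSet_Ioc fun x hx =>
      mul_nonneg (sq_nonneg _) (Real.rpow_nonneg hx.1.le _)
  rw [ENNReal.ofReal_rpow_of_nonneg hX0 h1p.le,
    ENNReal.ofReal_rpow_of_nonneg hD0 (by norm_num),
    ← ENNReal.ofReal_mul (mul_nonneg (Real.rpow_nonneg (div_nonneg hp0.le hγ0.le) _)
      (Real.rpow_nonneg (inv_nonneg.2 (by linarith)) _))]
  exact ENNReal.ofReal_le_ofReal (main_ineq γ p r hγ2 hpγ hr h hC1 hnn hz)
end

section
/- Let α ∈ ℝ. For every w = (z,l) ∈ ℝ^{2N+1} with w ≠ 0, the function d^{−α}(w) = (|z|⁴+l²)^{−α/4} satisfies −Δ_H(d^{−α})(w) = α(2N−α) · d(w)^{−α} · |z|²/(|z|⁴ + l²). -/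
open MeasureTheory Set Real

noncomputable section

/-- The Heisenberg group `ℍ^N = ℝ^N × ℝ^N × ℝ`, with points `w = (x, y, l)`, `z = (x, y)`. -/
abbrev H (N : ℕ) : Type := (Fin N → ℝ) × (Fin N → ℝ) × ℝ

/-- The coefficient vector at `w` of the vector field `X_j = ∂_{x_j} + 2 y_j ∂_l`. -/
def Xvec (N : ℕ) (j : Fin N) (w : H N) : H N := (Pi.single j 1, 0, 2 * w.2.1 j)

/-- The coefficient vector at `w` of the vector field `Y_j = ∂_{y_j} - 2 x_j ∂_l`. -/
def Yvec (N : ℕ) (j : Fin N) (w : H N) : H N := (0, Pi.single j 1, -2 * w.1 j)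

/-- `X_j f`, as a directional derivative. -/
def Xop (N : ℕ) (j : Fin N) (f : H N → ℝ) (w : H N) : ℝ := fderiv ℝ f w (Xvec N j w)

/-- `Y_j f`, as a directional derivative. -/
def Yop (N : ℕ) (j : Fin N) (f : H N → ℝ) (w : H N) : ℝ := fderiv ℝ f w (Yvec N j w)

/-- The squared horizontal gradient `|∇_H f|² = Σ_j ((X_j f)² + (Y_j f)²)`. -/
def gradHsq (N : ℕ) (f : H N → ℝ) (w : H N) : ℝ :=
  ∑ j, (Xop N j f w) ^ 2 + ∑ j, (Yop N j f w) ^ 2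

/-- The sub-Laplacian `Δ_H f = Σ_j (X_j(X_j f) + Y_j(Y_j f))`. -/
def subLap (N : ℕ) (f : H N → ℝ) (w : H N) : ℝ :=
  ∑ j, Xop N j (Xop N j f) w + ∑ j, Yop N j (Yop N j f) w

/-- `|z|²` for `w = (z, l) = (x, y, l)`. -/
def zsq (N : ℕ) (w : H N) : ℝ := ∑ j, (w.1 j) ^ 2 + ∑ j, (w.2.1 j) ^ 2

/-- The Korányi gauge `d(w) = (|z|⁴ + l²)^{1/4}`. -/
def dgauge (N : ℕ) (w : H N) : ℝ := ((zsq N w) ^ 2 + (w.2.2) ^ 2) ^ ((1 : ℝ) / 4)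
namespace HAux

variable {N : ℕ}

lemma fd_sq {E : Type*} [NormedAddCommGroup E] [NormedSpace ℝ E]
    {f : E → ℝ} {f' : E →L[ℝ] ℝ} {x : E} (hf : HasFDerivAt f f' x) :
    HasFDerivAt (fun v => f v ^ 2) ((2 * f x) • f') x := by
  simpa [pow_two, two_mul, add_smul] using hf.fun_mul hf

def px (N : ℕ) (j : Fin N) : H N →L[ℝ] ℝ :=
  (ContinuousLinearMap.proj j).comp (ContinuousLinearMap.fst ℝ (Fin N → ℝ) ((Fin N → ℝ) × ℝ))

def py (N : ℕ) (j : Fin N) : H N →L[ℝ] ℝ :=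
  (ContinuousLinearMap.proj j).comp
    ((ContinuousLinearMap.fst ℝ (Fin N → ℝ) ℝ).comp
      (ContinuousLinearMap.snd ℝ (Fin N → ℝ) ((Fin N → ℝ) × ℝ)))

def pl (N : ℕ) : H N →L[ℝ] ℝ :=
  (ContinuousLinearMap.snd ℝ (Fin N → ℝ) ℝ).comp
    (ContinuousLinearMap.snd ℝ (Fin N → ℝ) ((Fin N → ℝ) × ℝ))

@[simp] lemma px_apply (j : Fin N) (v : H N) : px N j v = v.1 j := rfl
@[simp] lemma py_apply (j : Fin N) (v : H N) : py N j v = v.2.1 j := rfl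
@[simp] lemma pl_apply (v : H N) : pl N v = v.2.2 := rfl

def Dz (N : ℕ) (w : H N) : H N →L[ℝ] ℝ :=
  ∑ j, (2 * w.1 j) • px N j + ∑ j, (2 * w.2.1 j) • py N j

lemma hasFDerivAt_zsq (w : H N) : HasFDerivAt (zsq N) (Dz N w) w := by
  have h1 : ∀ j : Fin N, HasFDerivAt (fun v : H N => (v.1 j) ^ 2)
      ((2 * w.1 j) • px N j) w := fun j => fd_sq ((px N j).hasFDerivAt (x := w))
  have h2 : ∀ j : Fin N, HasFDerivAt (fun v : H N => (v.2.1 j) ^ 2)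
      ((2 * w.2.1 j) • py N j) w := fun j => fd_sq ((py N j).hasFDerivAt (x := w))
  exact (HasFDerivAt.fun_sum (fun j _ => h1 j)).add (HasFDerivAt.fun_sum (fun j _ => h2 j))

def g (N : ℕ) (w : H N) : ℝ := (zsq N w) ^ 2 + w.2.2 ^ 2

def Dg (N : ℕ) (w : H N) : H N →L[ℝ] ℝ :=
  (2 * zsq N w) • Dz N w + (2 * w.2.2) • pl N

lemma hasFDerivAt_g (w : H N) : HasFDerivAt (g N) (Dg N w) w :=
  (fd_sq (hasFDerivAt_zsq w)).add (fd_sq ((pl N).hasFDerivAt (x := w)))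

lemma Dz_Xvec (w : H N) (j : Fin N) : Dz N w (Xvec N j w) = 2 * w.1 j := by
  simp [Dz, Xvec, ContinuousLinearMap.sum_apply, Pi.single_apply, mul_ite,
    Finset.sum_ite_eq']

lemma Dz_Yvec (w : H N) (j : Fin N) : Dz N w (Yvec N j w) = 2 * w.2.1 j := by
  simp [Dz, Yvec, ContinuousLinearMap.sum_apply, Pi.single_apply, mul_ite,
    Finset.sum_ite_eq']

lemma Dg_Xvec (w : H N) (j : Fin N) :
    Dg N w (Xvec N j w) = 4 * (zsq N w * w.1 j + w.2.2 * w.2.1 j) := by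
  simp only [Dg, ContinuousLinearMap.add_apply, ContinuousLinearMap.smul_apply,
    smul_eq_mul, Dz_Xvec, pl_apply]
  have : (Xvec N j w).2.2 = 2 * w.2.1 j := rfl
  rw [this]; ring

lemma Dg_Yvec (w : H N) (j : Fin N) :
    Dg N w (Yvec N j w) = 4 * (zsq N w * w.2.1 j - w.2.2 * w.1 j) := by
  simp only [Dg, ContinuousLinearMap.add_apply, ContinuousLinearMap.smul_apply,
    smul_eq_mul, Dz_Yvec, pl_apply]
  have : (Yvec N j w).2.2 = -2 * w.1 j := rfl
  rw [this]; ring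

lemma zsq_nonneg (w : H N) : 0 ≤ zsq N w :=
  add_nonneg (Finset.sum_nonneg fun _ _ => sq_nonneg _)
    (Finset.sum_nonneg fun _ _ => sq_nonneg _)

lemma g_nonneg (w : H N) : 0 ≤ g N w := add_nonneg (sq_nonneg _) (sq_nonneg _)

lemma g_pos (w : H N) (hw : w ≠ 0) : 0 < g N w := by
  rcases (g_nonneg w).lt_or_eq with h | h
  · exact h
  · exfalso
    have h' : (zsq N w) ^ 2 + w.2.2 ^ 2 = 0 := h.symm
    have hz : zsq N w = 0 := by
      nlinarith [sq_nonneg (zsq N w), sq_nonneg w.2.2]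
    have hl : w.2.2 = 0 := by nlinarith [sq_nonneg w.2.2]
    have h3 : (0:ℝ) ≤ ∑ j, (w.1 j) ^ 2 := Finset.sum_nonneg fun _ _ => sq_nonneg _
    have h2 : (0:ℝ) ≤ ∑ j, (w.2.1 j) ^ 2 := Finset.sum_nonneg fun _ _ => sq_nonneg _
    have hz' : ∑ j, (w.1 j) ^ 2 + ∑ j, (w.2.1 j) ^ 2 = 0 := hz
    have hx : ∀ j, w.1 j = 0 := by
      intro j
      have h1 : ∑ j, (w.1 j) ^ 2 = 0 := by linarith
      have := (Finset.sum_eq_zero_iff_of_nonneg (fun i _ => sq_nonneg (w.1 i))).mp h1 j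
        (Finset.mem_univ j)
      exact pow_eq_zero_iff (by norm_num) |>.mp this
    have hy : ∀ j, w.2.1 j = 0 := by
      intro j
      have h1 : ∑ j, (w.2.1 j) ^ 2 = 0 := by linarith
      have := (Finset.sum_eq_zero_iff_of_nonneg (fun i _ => sq_nonneg (w.2.1 i))).mp h1 j
        (Finset.mem_univ j)
      exact pow_eq_zero_iff (by norm_num) |>.mp this
    apply hw
    ext j
    · exact hx j
    · exact hy j
    · exact hl

variable (c : ℝ)

lemma hasFDerivAt_gc (w : H N) (hw : g N w ≠ 0) :
    HasFDerivAt (fun v => g N v ^ c) ((c * g N w ^ (c - 1)) • Dg N w) w :=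
  (hasFDerivAt_g w).rpow_const (Or.inl hw)

lemma Xop_gc (w : H N) (hw : 0 < g N w) (j : Fin N) :
    Xop N j (fun v => g N v ^ c) w
      = c * g N w ^ (c - 1) * (4 * (zsq N w * w.1 j + w.2.2 * w.2.1 j)) := by
  rw [Xop, (hasFDerivAt_gc c w hw.ne').fderiv]
  simp [Dg_Xvec]

lemma Yop_gc (w : H N) (hw : 0 < g N w) (j : Fin N) :
    Yop N j (fun v => g N v ^ c) w
      = c * g N w ^ (c - 1) * (4 * (zsq N w * w.2.1 j - w.2.2 * w.1 j)) := by
  rw [Yop, (hasFDerivAt_gc c w hw.ne').fderiv]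
  simp [Dg_Yvec]

lemma isOpen_gpos : IsOpen {v : H N | 0 < g N v} := by
  have : Continuous (g N) := by
    rw [continuous_iff_continuousAt]
    exact fun v => (hasFDerivAt_g v).continuousAt
  exact isOpen_lt continuous_const this

lemma second_X (w : H N) (hw : 0 < g N w) (j : Fin N) :
    Xop N j (Xop N j (fun v => g N v ^ c)) w
      = c * (c - 1) * g N w ^ (c - 2) * (4 * (zsq N w * w.1 j + w.2.2 * w.2.1 j)) ^ 2
        + c * g N w ^ (c - 1) * (4 * zsq N w + 8 * (w.1 j) ^ 2 + 8 * (w.2.1 j) ^ 2) := by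
  have hev : Xop N j (fun v => g N v ^ c)
      =ᶠ[nhds w] fun v => (c * g N v ^ (c - 1)) * (4 * (zsq N v * v.1 j + v.2.2 * v.2.1 j)) := by
    filter_upwards [isOpen_gpos.mem_nhds hw] with v hv
    exact Xop_gc c v hv j
  have hA : HasFDerivAt (fun v => c * g N v ^ (c - 1))
      (c • ((c - 1) * g N w ^ (c - 1 - 1)) • Dg N w) w :=
    ((hasFDerivAt_g w).rpow_const (Or.inl hw.ne')).const_mul c
  have h1 : HasFDerivAt (fun v : H N => zsq N v * v.1 j)
      (zsq N w • px N j + w.1 j • Dz N w) w :=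
    (hasFDerivAt_zsq w).mul ((px N j).hasFDerivAt (x := w))
  have h2 : HasFDerivAt (fun v : H N => v.2.2 * v.2.1 j)
      (w.2.2 • py N j + w.2.1 j • pl N) w :=
    ((pl N).hasFDerivAt (x := w)).mul ((py N j).hasFDerivAt (x := w))
  have hB : HasFDerivAt (fun v : H N => 4 * (zsq N v * v.1 j + v.2.2 * v.2.1 j))
      ((4 : ℝ) • ((zsq N w • px N j + w.1 j • Dz N w) + (w.2.2 • py N j + w.2.1 j • pl N))) w :=
    (h1.add h2).const_mul 4
  have hAB := hA.fun_mul hB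
  have hkey : Xop N j (Xop N j (fun v => g N v ^ c)) w
      = (((c * g N w ^ (c - 1)) •
            ((4 : ℝ) • ((zsq N w • px N j + w.1 j • Dz N w) + (w.2.2 • py N j + w.2.1 j • pl N)))
          + (4 * (zsq N w * w.1 j + w.2.2 * w.2.1 j)) •
            (c • ((c - 1) * g N w ^ (c - 1 - 1)) • Dg N w)) (Xvec N j w)) := by
    rw [Xop, hev.fderiv_eq, hAB.fderiv]
  rw [hkey]
  simp only [ContinuousLinearMap.add_apply, ContinuousLinearMap.smul_apply, smul_eq_mul,
    Dz_Xvec, Dg_Xvec, px_apply, py_apply, pl_apply]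
  have hx : (Xvec N j w).1 j = 1 := by simp [Xvec]
  have hy : (Xvec N j w).2.1 j = 0 := by simp [Xvec]
  have hl : (Xvec N j w).2.2 = 2 * w.2.1 j := rfl
  rw [hx, hy, hl]
  have h12 : c - 1 - 1 = c - 2 := by ring
  rw [h12]
  ring

lemma second_Y (w : H N) (hw : 0 < g N w) (j : Fin N) :
    Yop N j (Yop N j (fun v => g N v ^ c)) w
      = c * (c - 1) * g N w ^ (c - 2) * (4 * (zsq N w * w.2.1 j - w.2.2 * w.1 j)) ^ 2
        + c * g N w ^ (c - 1) * (4 * zsq N w + 8 * (w.1 j) ^ 2 + 8 * (w.2.1 j) ^ 2) := by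
  have hev : Yop N j (fun v => g N v ^ c)
      =ᶠ[nhds w] fun v => (c * g N v ^ (c - 1)) * (4 * (zsq N v * v.2.1 j - v.2.2 * v.1 j)) := by
    filter_upwards [isOpen_gpos.mem_nhds hw] with v hv
    exact Yop_gc c v hv j
  have hA : HasFDerivAt (fun v => c * g N v ^ (c - 1))
      (c • ((c - 1) * g N w ^ (c - 1 - 1)) • Dg N w) w :=
    ((hasFDerivAt_g w).rpow_const (Or.inl hw.ne')).const_mul c
  have h1 : HasFDerivAt (fun v : H N => zsq N v * v.2.1 j)
      (zsq N w • py N j + w.2.1 j • Dz N w) w :=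
    (hasFDerivAt_zsq w).mul ((py N j).hasFDerivAt (x := w))
  have h2 : HasFDerivAt (fun v : H N => v.2.2 * v.1 j)
      (w.2.2 • px N j + w.1 j • pl N) w :=
    ((pl N).hasFDerivAt (x := w)).mul ((px N j).hasFDerivAt (x := w))
  have hB : HasFDerivAt (fun v : H N => 4 * (zsq N v * v.2.1 j - v.2.2 * v.1 j))
      ((4 : ℝ) • ((zsq N w • py N j + w.2.1 j • Dz N w) - (w.2.2 • px N j + w.1 j • pl N))) w :=
    (h1.sub h2).const_mul 4
  have hAB := hA.fun_mul hB
  have hkey : Yop N j (Yop N j (fun v => g N v ^ c)) w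
      = (((c * g N w ^ (c - 1)) •
            ((4 : ℝ) • ((zsq N w • py N j + w.2.1 j • Dz N w) - (w.2.2 • px N j + w.1 j • pl N)))
          + (4 * (zsq N w * w.2.1 j - w.2.2 * w.1 j)) •
            (c • ((c - 1) * g N w ^ (c - 1 - 1)) • Dg N w)) (Yvec N j w)) := by
    rw [Yop, hev.fderiv_eq, hAB.fderiv]
  rw [hkey]
  simp only [ContinuousLinearMap.add_apply, ContinuousLinearMap.sub_apply,
    ContinuousLinearMap.smul_apply, smul_eq_mul, Dz_Yvec, Dg_Yvec, px_apply, py_apply, pl_apply]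
  have hx : (Yvec N j w).1 j = 0 := by simp [Yvec]
  have hy : (Yvec N j w).2.1 j = 1 := by simp [Yvec]
  have hl : (Yvec N j w).2.2 = -2 * w.1 j := rfl
  rw [hx, hy, hl]
  have h12 : c - 1 - 1 = c - 2 := by ring
  rw [h12]
  ring

lemma subLap_gc (w : H N) (hw : 0 < g N w) :
    subLap N (fun v => g N v ^ c) w
      = c * (c - 1) * g N w ^ (c - 2) * (16 * zsq N w * g N w)
        + c * g N w ^ (c - 1) * ((8 * N + 16) * zsq N w) := by
  unfold subLap
  rw [← Finset.sum_add_distrib]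
  have key : ∀ j : Fin N, Xop N j (Xop N j (fun v => g N v ^ c)) w
      + Yop N j (Yop N j (fun v => g N v ^ c)) w
      = c * g N w ^ (c - 1) * (8 * zsq N w)
        + (c * (c - 1) * g N w ^ (c - 2) * (16 * g N w) + c * g N w ^ (c - 1) * 16)
            * ((w.1 j) ^ 2 + (w.2.1 j) ^ 2) := by
    intro j
    rw [second_X c w hw j, second_Y c w hw j]
    have hgg : g N w = zsq N w ^ 2 + w.2.2 ^ 2 := rfl
    rw [hgg]
    ring
  rw [Finset.sum_congr rfl (fun j _ => key j), Finset.sum_add_distrib, Finset.sum_const,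
    ← Finset.mul_sum]
  have hsum : ∑ j : Fin N, ((w.1 j) ^ 2 + (w.2.1 j) ^ 2) = zsq N w := by
    rw [zsq, Finset.sum_add_distrib]
  rw [hsum, Finset.card_univ, Fintype.card_fin, nsmul_eq_mul]
  ring

end HAux

open HAux in
theorem stmt_7 (N : ℕ) (hN : 1 ≤ N) (α : ℝ) (w : H N) (hw : w ≠ 0) :
    -subLap N (fun v => dgauge N v ^ (-α)) w
      = α * (2 * (N : ℝ) - α) * dgauge N w ^ (-α) *
          (zsq N w / ((zsq N w) ^ 2 + (w.2.2) ^ 2)) := by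

  have hg : 0 < g N w := g_pos w hw
  have hd : ∀ v : H N, dgauge N v ^ (-α) = g N v ^ (-α / 4) := by
    intro v
    have h0 : (0:ℝ) ≤ (zsq N v) ^ 2 + v.2.2 ^ 2 := g_nonneg v
    rw [dgauge, ← Real.rpow_mul h0]
    rw [show (1:ℝ) / 4 * -α = -α / 4 by ring]
    rfl
  have hfun : (fun v => dgauge N v ^ (-α)) = fun v => g N v ^ (-α / 4) := funext hd
  rw [hfun, hd w, subLap_gc (-α / 4) w hg]
  have hG2 : g N w ^ (-α / 4 - 2) = g N w ^ (-α / 4) / g N w ^ 2 := by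
    rw [Real.rpow_sub hg]
    norm_num [Real.rpow_natCast]
  have hG1 : g N w ^ (-α / 4 - 1) = g N w ^ (-α / 4) / g N w := by
    rw [Real.rpow_sub hg, Real.rpow_one]
  rw [hG1, hG2]
  have hgg : g N w = zsq N w ^ 2 + w.2.2 ^ 2 := rfl
  rw [← hgg]
  field_simp
  ring
end
end

section
/- For every w = (z,l) ∈ ℝ^{2N+1} with w ≠ 0, the function d^{−2N}(w) = (|z|⁴+l²)^{−N/2} satisfies Δ_H(d^{−2N})(w) = 0; that is, d^{2−Q} with Q = 2N+2 is Δ_H-harmonic away from the origin. -/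
open MeasureTheory Set Real

noncomputable section

namespace HeisenbergAux

variable (N : ℕ)

/-- Coordinate functional `u ↦ u.1 j`. -/
def Lx (j : Fin N) : H N →L[ℝ] ℝ :=
  (ContinuousLinearMap.proj j).comp (ContinuousLinearMap.fst ℝ (Fin N → ℝ) ((Fin N → ℝ) × ℝ))

/-- Coordinate functional `u ↦ u.2.1 j`. -/
def Ly (j : Fin N) : H N →L[ℝ] ℝ :=
  ((ContinuousLinearMap.proj j).comp (ContinuousLinearMap.fst ℝ (Fin N → ℝ) ℝ)).comp
    (ContinuousLinearMap.snd ℝ (Fin N → ℝ) ((Fin N → ℝ) × ℝ))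

/-- Coordinate functional `u ↦ u.2.2`. -/
def Ll : H N →L[ℝ] ℝ :=
  (ContinuousLinearMap.snd ℝ (Fin N → ℝ) ℝ).comp
    (ContinuousLinearMap.snd ℝ (Fin N → ℝ) ((Fin N → ℝ) × ℝ))

@[simp] lemma Lx_apply (j : Fin N) (u : H N) : Lx N j u = u.1 j := rfl
@[simp] lemma Ly_apply (j : Fin N) (u : H N) : Ly N j u = u.2.1 j := rfl
@[simp] lemma Ll_apply (u : H N) : Ll N u = u.2.2 := rfl

/-- `ρ(v) = |z|⁴ + l² = d(v)⁴`. -/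
def rho (v : H N) : ℝ := (zsq N v) ^ 2 + v.2.2 ^ 2

/-- Derivative of `zsq`. -/
def Zder (v : H N) : H N →L[ℝ] ℝ :=
  (∑ j, (2 * v.1 j) • Lx N j) + ∑ j, (2 * v.2.1 j) • Ly N j

lemma hasFDerivAt_zsq (v : H N) : HasFDerivAt (zsq N) (Zder N v) v := by
  have h1 := HasFDerivAt.fun_sum (fun j (_ : j ∈ Finset.univ) =>
    (hasDerivAt_pow 2 (v.1 j)).comp_hasFDerivAt v ((Lx N j).hasFDerivAt (x := v)))
  have h2 := HasFDerivAt.fun_sum (fun j (_ : j ∈ Finset.univ) =>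
    (hasDerivAt_pow 2 (v.2.1 j)).comp_hasFDerivAt v ((Ly N j).hasFDerivAt (x := v)))
  exact (h1.add h2).congr_fderiv (ContinuousLinearMap.ext fun u => by
    simp [Zder, ContinuousLinearMap.sum_apply, ContinuousLinearMap.smul_apply])

/-- Derivative of `rho`. -/
def Drho (v : H N) : H N →L[ℝ] ℝ := (2 * zsq N v) • Zder N v + (2 * v.2.2) • Ll N

lemma hasFDerivAt_rho (v : H N) : HasFDerivAt (rho N) (Drho N v) v := by
  have h1 := (hasDerivAt_pow 2 (zsq N v)).comp_hasFDerivAt v (hasFDerivAt_zsq N v)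
  have h2 := (hasDerivAt_pow 2 v.2.2).comp_hasFDerivAt v ((Ll N).hasFDerivAt (x := v))
  exact (h1.add h2).congr_fderiv (ContinuousLinearMap.ext fun u => by
    simp [Drho, ContinuousLinearMap.smul_apply])

@[simp] lemma Zder_X' (v : H N) (j : Fin N) (a : ℝ) :
    Zder N v (Pi.single j 1, 0, a) = 2 * v.1 j := by
  simp [Zder, ContinuousLinearMap.sum_apply, Pi.single_apply, mul_ite,
    Finset.sum_ite_eq']

@[simp] lemma Zder_Y' (v : H N) (j : Fin N) (a : ℝ) :
    Zder N v (0, Pi.single j 1, a) = 2 * v.2.1 j := by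
  simp [Zder, ContinuousLinearMap.sum_apply, Pi.single_apply, mul_ite,
    Finset.sum_ite_eq']

@[simp] lemma Zder_X (v : H N) (j : Fin N) : Zder N v (Xvec N j v) = 2 * v.1 j := by
  rw [Xvec]; simp

@[simp] lemma Zder_Y (v : H N) (j : Fin N) : Zder N v (Yvec N j v) = 2 * v.2.1 j := by
  rw [Yvec]; simp

/-- `X_j ρ`. -/
def P (j : Fin N) (v : H N) : ℝ := 4 * v.1 j * zsq N v + 4 * v.2.1 j * v.2.2

/-- `Y_j ρ`. -/
def Q (j : Fin N) (v : H N) : ℝ := 4 * v.2.1 j * zsq N v - 4 * v.1 j * v.2.2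

@[simp] lemma Drho_X (v : H N) (j : Fin N) : Drho N v (Xvec N j v) = P N j v := by
  simp [Drho, P, Xvec]
  ring

@[simp] lemma Drho_Y (v : H N) (j : Fin N) : Drho N v (Yvec N j v) = Q N j v := by
  simp [Drho, Q, Yvec]
  ring

/-- The exponent `c = -N/2`. -/
def cc : ℝ := -(N : ℝ) / 2

/-- `g = ρ^c = d^{-2N}`. -/
def gfun (v : H N) : ℝ := rho N v ^ cc N

def XG (j : Fin N) (v : H N) : ℝ := cc N * (rho N v ^ (cc N - 1) * P N j v)

def YG (j : Fin N) (v : H N) : ℝ := cc N * (rho N v ^ (cc N - 1) * Q N j v)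

lemma hasFDerivAt_g (v : H N) (h : rho N v ≠ 0) :
    HasFDerivAt (gfun N) ((cc N * rho N v ^ (cc N - 1)) • Drho N v) v :=
  (hasFDerivAt_rho N v).rpow_const (Or.inl h)

lemma Xop_g (j : Fin N) (v : H N) (h : rho N v ≠ 0) : Xop N j (gfun N) v = XG N j v := by
  rw [Xop, (hasFDerivAt_g N v h).fderiv]
  simp [XG]
  ring

lemma Yop_g (j : Fin N) (v : H N) (h : rho N v ≠ 0) : Yop N j (gfun N) v = YG N j v := by
  rw [Yop, (hasFDerivAt_g N v h).fderiv]
  simp [YG]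
  ring

/-- Derivative of `P j`. -/
def DP (j : Fin N) (v : H N) : H N →L[ℝ] ℝ :=
  ((4 * zsq N v) • Lx N j + (4 * v.1 j) • Zder N v) +
    ((4 * v.2.2) • Ly N j + (4 * v.2.1 j) • Ll N)

/-- Derivative of `Q j`. -/
def DQ (j : Fin N) (v : H N) : H N →L[ℝ] ℝ :=
  ((4 * zsq N v) • Ly N j + (4 * v.2.1 j) • Zder N v) -
    ((4 * v.2.2) • Lx N j + (4 * v.1 j) • Ll N)

lemma hasFDerivAt_P (j : Fin N) (v : H N) : HasFDerivAt (P N j) (DP N j v) v := by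
  have h1 := (((Lx N j).hasFDerivAt (x := v)).const_mul (4 : ℝ)).mul (hasFDerivAt_zsq N v)
  have h2 := (((Ly N j).hasFDerivAt (x := v)).const_mul (4 : ℝ)).mul
    ((Ll N).hasFDerivAt (x := v))
  exact (h1.add h2).congr_fderiv (ContinuousLinearMap.ext fun u => by
    simp [DP, ContinuousLinearMap.smul_apply]
    ring)

lemma hasFDerivAt_Q (j : Fin N) (v : H N) : HasFDerivAt (Q N j) (DQ N j v) v := by
  have h1 := (((Ly N j).hasFDerivAt (x := v)).const_mul (4 : ℝ)).mul (hasFDerivAt_zsq N v)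
  have h2 := (((Lx N j).hasFDerivAt (x := v)).const_mul (4 : ℝ)).mul
    ((Ll N).hasFDerivAt (x := v))
  exact (h1.sub h2).congr_fderiv (ContinuousLinearMap.ext fun u => by
    simp [DQ, ContinuousLinearMap.smul_apply]
    ring)

@[simp] lemma DP_X (v : H N) (j : Fin N) :
    DP N j v (Xvec N j v) = 4 * zsq N v + 8 * (v.1 j) ^ 2 + 8 * (v.2.1 j) ^ 2 := by
  simp [DP, Xvec]
  ring

@[simp] lemma DQ_Y (v : H N) (j : Fin N) :
    DQ N j v (Yvec N j v) = 4 * zsq N v + 8 * (v.1 j) ^ 2 + 8 * (v.2.1 j) ^ 2 := by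
  simp [DQ, Yvec]
  ring

lemma hasFDerivAt_XG (j : Fin N) (w : H N) (h : rho N w ≠ 0) :
    HasFDerivAt (XG N j)
      (cc N • (rho N w ^ (cc N - 1) • DP N j w +
        (P N j w * ((cc N - 1) * rho N w ^ (cc N - 1 - 1))) • Drho N w)) w := by
  have h1 : HasFDerivAt (fun v => rho N v ^ (cc N - 1))
      (((cc N - 1) * rho N w ^ (cc N - 1 - 1)) • Drho N w) w :=
    (hasFDerivAt_rho N w).rpow_const (Or.inl h)
  have h2 := hasFDerivAt_P N j w
  have h3 := (h1.mul h2).const_mul (cc N)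
  exact h3.congr_fderiv (ContinuousLinearMap.ext fun u => by
    simp only [ContinuousLinearMap.smul_apply, ContinuousLinearMap.add_apply,
      smul_eq_mul]
    ring)

lemma hasFDerivAt_YG (j : Fin N) (w : H N) (h : rho N w ≠ 0) :
    HasFDerivAt (YG N j)
      (cc N • (rho N w ^ (cc N - 1) • DQ N j w +
        (Q N j w * ((cc N - 1) * rho N w ^ (cc N - 1 - 1))) • Drho N w)) w := by
  have h1 : HasFDerivAt (fun v => rho N v ^ (cc N - 1))
      (((cc N - 1) * rho N w ^ (cc N - 1 - 1)) • Drho N w) w :=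
    (hasFDerivAt_rho N w).rpow_const (Or.inl h)
  have h2 := hasFDerivAt_Q N j w
  have h3 := (h1.mul h2).const_mul (cc N)
  exact h3.congr_fderiv (ContinuousLinearMap.ext fun u => by
    simp only [ContinuousLinearMap.smul_apply, ContinuousLinearMap.add_apply,
      smul_eq_mul]
    ring)

lemma Xop_XG (j : Fin N) (w : H N) (h : rho N w ≠ 0) :
    Xop N j (XG N j) w =
      cc N * (rho N w ^ (cc N - 1) * (4 * zsq N w + 8 * (w.1 j) ^ 2 + 8 * (w.2.1 j) ^ 2) +
        (cc N - 1) * rho N w ^ (cc N - 1 - 1) * (P N j w) ^ 2) := by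
  rw [Xop, (hasFDerivAt_XG N j w h).fderiv]
  simp [ContinuousLinearMap.smul_apply]
  ring

lemma Yop_YG (j : Fin N) (w : H N) (h : rho N w ≠ 0) :
    Yop N j (YG N j) w =
      cc N * (rho N w ^ (cc N - 1) * (4 * zsq N w + 8 * (w.1 j) ^ 2 + 8 * (w.2.1 j) ^ 2) +
        (cc N - 1) * rho N w ^ (cc N - 1 - 1) * (Q N j w) ^ 2) := by
  rw [Yop, (hasFDerivAt_YG N j w h).fderiv]
  simp [ContinuousLinearMap.smul_apply]
  ring

lemma rho_ne_zero (w : H N) (hw : w ≠ 0) : rho N w ≠ 0 := by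
  intro h0
  apply hw
  have hnn1 : (0 : ℝ) ≤ ∑ j, (w.1 j) ^ 2 :=
    Finset.sum_nonneg fun j _ => sq_nonneg _
  have hnn2 : (0 : ℝ) ≤ ∑ j, (w.2.1 j) ^ 2 :=
    Finset.sum_nonneg fun j _ => sq_nonneg _
  have hz : zsq N w = 0 ∧ w.2.2 = 0 := by
    constructor <;> nlinarith [sq_nonneg (zsq N w), sq_nonneg w.2.2,
      (by rw [rho] at h0; exact h0 : (zsq N w) ^ 2 + w.2.2 ^ 2 = 0)]
  have hs1 : ∑ j, (w.1 j) ^ 2 = 0 ∧ ∑ j, (w.2.1 j) ^ 2 = 0 := by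
    have := hz.1
    rw [zsq] at this
    constructor <;> linarith
  have hx : ∀ j, w.1 j = 0 := fun j => by
    have := (Finset.sum_eq_zero_iff_of_nonneg (fun i _ => sq_nonneg (w.1 i))).mp hs1.1 j
      (Finset.mem_univ j)
    exact pow_eq_zero_iff two_ne_zero |>.mp this
  have hy : ∀ j, w.2.1 j = 0 := fun j => by
    have := (Finset.sum_eq_zero_iff_of_nonneg (fun i _ => sq_nonneg (w.2.1 i))).mp hs1.2 j
      (Finset.mem_univ j)
    exact pow_eq_zero_iff two_ne_zero |>.mp this
  have : w = (w.1, w.2.1, w.2.2) := rfl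
  rw [this]
  refine Prod.ext (funext hx) (Prod.ext (funext hy) hz.2)

end HeisenbergAux

open HeisenbergAux

theorem stmt_8 (N : ℕ) (hN : 1 ≤ N) (w : H N) (hw : w ≠ 0) :
    subLap N (fun v => dgauge N v ^ (-(2 * (N : ℝ)))) w = 0 := by
  classical
  -- replace the function by `ρ^c`
  have hfg : (fun v => dgauge N v ^ (-(2 * (N : ℝ)))) = gfun N := by
    funext v
    have h0 : (0 : ℝ) ≤ rho N v := by
      have := sq_nonneg (zsq N v)
      have := sq_nonneg v.2.2
      rw [rho]; linarith
    calc dgauge N v ^ (-(2 * (N : ℝ)))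
        = (rho N v ^ ((1 : ℝ) / 4)) ^ (-(2 * (N : ℝ))) := rfl
      _ = rho N v ^ ((1 : ℝ) / 4 * (-(2 * (N : ℝ)))) := (Real.rpow_mul h0 _ _).symm
      _ = gfun N v := by
          rw [gfun, show (1 : ℝ) / 4 * (-(2 * (N : ℝ))) = cc N by rw [cc]; ring]
  rw [hfg]
  have hwU : rho N w ≠ 0 := rho_ne_zero N w hw
  have hUopen : IsOpen {v : H N | rho N v ≠ 0} :=
    isOpen_ne.preimage
      (Differentiable.continuous fun v => (hasFDerivAt_rho N v).differentiableAt)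
  have hXX : ∀ j : Fin N, Xop N j (Xop N j (gfun N)) w = Xop N j (XG N j) w := by
    intro j
    have heq : Xop N j (gfun N) =ᶠ[nhds w] XG N j := by
      filter_upwards [hUopen.mem_nhds hwU] with v hv using Xop_g N j v hv
    rw [Xop, Xop, heq.fderiv_eq]
  have hYY : ∀ j : Fin N, Yop N j (Yop N j (gfun N)) w = Yop N j (YG N j) w := by
    intro j
    have heq : Yop N j (gfun N) =ᶠ[nhds w] YG N j := by
      filter_upwards [hUopen.mem_nhds hwU] with v hv using Yop_g N j v hv
    rw [Yop, Yop, heq.fderiv_eq]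
  -- abbreviations
  set s := zsq N w with hs
  set l := w.2.2 with hl
  set K := rho N w ^ (cc N - 1 - 1) with hK
  have hr : rho N w = s ^ 2 + l ^ 2 := rfl
  have hK1 : rho N w ^ (cc N - 1) = K * (s ^ 2 + l ^ 2) := by
    rw [show cc N - 1 = cc N - 1 - 1 + 1 by ring, Real.rpow_add_one hwU, hK, hr]
  -- per-index closed form
  have hterm : ∀ j : Fin N,
      Xop N j (Xop N j (gfun N)) w + Yop N j (Yop N j (gfun N)) w =
        (16 * cc N ^ 2 * K * (s ^ 2 + l ^ 2)) * ((w.1 j) ^ 2 + (w.2.1 j) ^ 2) +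
          8 * s * cc N * K * (s ^ 2 + l ^ 2) := by
    intro j
    rw [hXX j, hYY j, Xop_XG N j w hwU, Yop_YG N j w hwU, hK1, ← hK, P, Q, ← hs, ← hl]
    ring
  rw [subLap, ← Finset.sum_add_distrib, Finset.sum_congr rfl fun j _ => hterm j,
    Finset.sum_add_distrib, ← Finset.mul_sum, Finset.sum_const, Finset.card_univ,
    Fintype.card_fin, nsmul_eq_mul]
  have hzs : ∑ j, ((w.1 j) ^ 2 + (w.2.1 j) ^ 2) = s := by
    rw [hs, zsq, Finset.sum_add_distrib]
  rw [hzs, cc]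
  ring
end
end

section
/- (Hardy inequality on the Heisenberg group, Garofalo–Lanconelli.) For every u ∈ C_c^∞(ℝ^{2N+1}), one has ∫_{ℝ^{2N+1}} |∇_H u(w)|² dw ≥ N² ∫_{ℝ^{2N+1}} (|z|²/(|z|⁴ + l²)) |u(w)|² dw, where w = (z,l). -/
open MeasureTheory Set Real

noncomputable section

set_option linter.unusedSectionVars false

section pd
variable {N : ℕ} {f g : H N → ℝ} {w v : H N}

lemma pd_add (hf : DifferentiableAt ℝ f w) (hg : DifferentiableAt ℝ g w) :
    fderiv ℝ (fun w => f w + g w) w v = fderiv ℝ f w v + fderiv ℝ g w v := by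
  rw [fderiv_fun_add hf hg]; rfl

lemma pd_mul (hf : DifferentiableAt ℝ f w) (hg : DifferentiableAt ℝ g w) :
    fderiv ℝ (fun w => f w * g w) w v = f w * fderiv ℝ g w v + g w * fderiv ℝ f w v := by
  rw [fderiv_fun_mul hf hg]; simp

lemma pd_const_mul (hf : DifferentiableAt ℝ f w) (c : ℝ) :
    fderiv ℝ (fun w => c * f w) w v = c * fderiv ℝ f w v := by
  rw [fderiv_const_mul hf c]; simp

lemma pd_inv (hf : DifferentiableAt ℝ f w) (h0 : f w ≠ 0) :
    fderiv ℝ (fun w => (f w)⁻¹) w v = -fderiv ℝ f w v / (f w) ^ 2 := by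
  have : (fun w => (f w)⁻¹) = Inv.inv ∘ f := rfl
  rw [this, fderiv_comp w (differentiableAt_inv h0) hf]
  simp [fderiv_inv]
  ring

lemma pd_sum {ι : Type*} {s : Finset ι} {A : ι → H N → ℝ}
    (h : ∀ i ∈ s, DifferentiableAt ℝ (A i) w) :
    fderiv ℝ (fun w => ∑ i ∈ s, A i w) w v = ∑ i ∈ s, fderiv ℝ (A i) w v := by
  rw [fderiv_fun_sum h]; simp

lemma pd_sq (hf : DifferentiableAt ℝ f w) :
    fderiv ℝ (fun w => (f w) ^ 2) w v = 2 * f w * fderiv ℝ f w v := by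
  have : (fun w => (f w) ^ 2) = fun w => f w * f w := by funext w; ring
  rw [this, pd_mul hf hf]; ring

def clmx (N : ℕ) (i : Fin N) : H N →L[ℝ] ℝ :=
  (ContinuousLinearMap.proj i).comp (ContinuousLinearMap.fst ℝ _ _)

def clmy (N : ℕ) (i : Fin N) : H N →L[ℝ] ℝ :=
  ((ContinuousLinearMap.proj i).comp (ContinuousLinearMap.fst ℝ (Fin N → ℝ) ℝ)).comp
    (ContinuousLinearMap.snd ℝ _ _)

def clml (N : ℕ) : H N →L[ℝ] ℝ :=
  (ContinuousLinearMap.snd ℝ (Fin N → ℝ) ℝ).comp (ContinuousLinearMap.snd ℝ _ _)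

lemma clmx_eq (i : Fin N) : (fun w : H N => w.1 i) = ⇑(clmx N i) := rfl
lemma clmy_eq (i : Fin N) : (fun w : H N => w.2.1 i) = ⇑(clmy N i) := rfl
lemma clml_eq : (fun w : H N => w.2.2) = ⇑(clml N) := rfl

lemma diff_x (i : Fin N) : Differentiable ℝ (fun w : H N => w.1 i) := by
  rw [clmx_eq]; exact (clmx N i).differentiable
lemma diff_y (i : Fin N) : Differentiable ℝ (fun w : H N => w.2.1 i) := by
  rw [clmy_eq]; exact (clmy N i).differentiable
lemma diff_l : Differentiable ℝ (fun w : H N => w.2.2) := by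
  rw [clml_eq]; exact (clml N).differentiable

lemma pd_x (i : Fin N) : fderiv ℝ (fun w : H N => w.1 i) w v = v.1 i := by
  rw [clmx_eq, ContinuousLinearMap.fderiv]; rfl
lemma pd_y (i : Fin N) : fderiv ℝ (fun w : H N => w.2.1 i) w v = v.2.1 i := by
  rw [clmy_eq, ContinuousLinearMap.fderiv]; rfl
lemma pd_l : fderiv ℝ (fun w : H N => w.2.2) w v = v.2.2 := by
  rw [clml_eq, ContinuousLinearMap.fderiv]; rfl

end pd

section funcs
variable {N : ℕ}

def Afun (N : ℕ) (j : Fin N) (w : H N) : ℝ := zsq N w * w.1 j + w.2.2 * w.2.1 j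
def Bfun (N : ℕ) (j : Fin N) (w : H N) : ℝ := zsq N w * w.2.1 j - w.2.2 * w.1 j
def sfun (N : ℕ) (ε : ℝ) (w : H N) : ℝ := (zsq N w) ^ 2 + (w.2.2) ^ 2 + ε
def Ffun (N : ℕ) (ε : ℝ) (j : Fin N) (w : H N) : ℝ := -(N : ℝ) * Afun N j w * (sfun N ε w)⁻¹
def Gfun (N : ℕ) (ε : ℝ) (j : Fin N) (w : H N) : ℝ := -(N : ℝ) * Bfun N j w * (sfun N ε w)⁻¹

lemma diff_zsq : Differentiable ℝ (zsq N) := by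
  apply Differentiable.add
  · exact Differentiable.fun_sum fun i _ => (diff_x i).fun_pow 2
  · exact Differentiable.fun_sum fun i _ => (diff_y i).fun_pow 2

lemma diff_A (j : Fin N) : Differentiable ℝ (Afun N j) :=
  (diff_zsq.mul (diff_x j)).add (diff_l.mul (diff_y j))
lemma diff_B (j : Fin N) : Differentiable ℝ (Bfun N j) :=
  (diff_zsq.mul (diff_y j)).sub (diff_l.mul (diff_x j))
lemma diff_s (ε : ℝ) : Differentiable ℝ (sfun N ε) :=
  ((diff_zsq.pow 2).add (diff_l.pow 2)).add_const ε

lemma sfun_pos {ε : ℝ} (hε : 0 < ε) (w : H N) : 0 < sfun N ε w := by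
  have : (0:ℝ) ≤ (zsq N w)^2 + (w.2.2)^2 := by positivity
  unfold sfun; linarith

lemma diff_F {ε : ℝ} (hε : 0 < ε) (j : Fin N) : Differentiable ℝ (Ffun N ε j) := by
  intro w
  exact (((diff_A j w).const_mul _).mul ((diff_s ε w).inv (sfun_pos hε w).ne'))
lemma diff_G {ε : ℝ} (hε : 0 < ε) (j : Fin N) : Differentiable ℝ (Gfun N ε j) := by
  intro w
  exact (((diff_B j w).const_mul _).mul ((diff_s ε w).inv (sfun_pos hε w).ne'))

-- directional derivative of zsq along arbitrary v
lemma pd_zsq {w v : H N} :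
    fderiv ℝ (zsq N) w v = ∑ i, 2 * w.1 i * v.1 i + ∑ i, 2 * w.2.1 i * v.2.1 i := by
  unfold zsq
  rw [pd_add (by fun_prop) (by fun_prop), pd_sum (fun i _ => by fun_prop),
    pd_sum (fun i _ => by fun_prop)]
  congr 1
  · exact Finset.sum_congr rfl fun i _ => by rw [pd_sq (diff_x i w), pd_x]
  · exact Finset.sum_congr rfl fun i _ => by rw [pd_sq (diff_y i w), pd_y]

lemma xvec_1 (j i : Fin N) (w : H N) : (Xvec N j w).1 i = (Pi.single j 1 : Fin N → ℝ) i := rfl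
lemma xvec_21 (j i : Fin N) (w : H N) : (Xvec N j w).2.1 i = 0 := rfl
lemma xvec_22 (j : Fin N) (w : H N) : (Xvec N j w).2.2 = 2 * w.2.1 j := rfl
lemma yvec_1 (j i : Fin N) (w : H N) : (Yvec N j w).1 i = 0 := rfl
lemma yvec_21 (j i : Fin N) (w : H N) : (Yvec N j w).2.1 i = (Pi.single j 1 : Fin N → ℝ) i := rfl
lemma yvec_22 (j : Fin N) (w : H N) : (Yvec N j w).2.2 = -2 * w.1 j := rfl

lemma sum_single {c : Fin N → ℝ} (j : Fin N) :
    ∑ i, c i * (Pi.single j 1 : Fin N → ℝ) i = c j := by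
  simp [Pi.single_apply, mul_ite, Finset.sum_ite_eq']

lemma xop_zsq (j : Fin N) (w : H N) : Xop N j (zsq N) w = 2 * w.1 j := by
  unfold Xop
  rw [pd_zsq]
  simp only [xvec_1, xvec_21, mul_zero, Finset.sum_const_zero, add_zero]
  exact sum_single j

lemma yop_zsq (j : Fin N) (w : H N) : Yop N j (zsq N) w = 2 * w.2.1 j := by
  unfold Yop
  rw [pd_zsq]
  simp only [yvec_1, yvec_21, mul_zero, Finset.sum_const_zero, zero_add]
  exact sum_single j

lemma xop_x (j i : Fin N) (w : H N) :
    Xop N j (fun w => w.1 i) w = (Pi.single j 1 : Fin N → ℝ) i := by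
  unfold Xop; rw [pd_x]; rfl
lemma xop_y (j i : Fin N) (w : H N) : Xop N j (fun w => w.2.1 i) w = 0 := by
  unfold Xop; rw [pd_y]; rfl
lemma xop_l (j : Fin N) (w : H N) : Xop N j (fun w => w.2.2) w = 2 * w.2.1 j := by
  unfold Xop; rw [pd_l]; rfl
lemma yop_x (j i : Fin N) (w : H N) : Yop N j (fun w => w.1 i) w = 0 := by
  unfold Yop; rw [pd_x]; rfl
lemma yop_y (j i : Fin N) (w : H N) :
    Yop N j (fun w => w.2.1 i) w = (Pi.single j 1 : Fin N → ℝ) i := by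
  unfold Yop; rw [pd_y]; rfl
lemma yop_l (j : Fin N) (w : H N) : Yop N j (fun w => w.2.2) w = -2 * w.1 j := by
  unfold Yop; rw [pd_l]; rfl

end funcs

section comps
variable {N : ℕ}

lemma xop_A (j : Fin N) (w : H N) :
    Xop N j (Afun N j) w = zsq N w + 2 * (w.1 j) ^ 2 + 2 * (w.2.1 j) ^ 2 := by
  unfold Xop Afun
  rw [pd_add ((diff_zsq w).fun_mul (diff_x j w)) ((diff_l w).fun_mul (diff_y j w)),
    pd_mul (diff_zsq w) (diff_x j w), pd_mul (diff_l w) (diff_y j w)]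
  have h1 := xop_zsq j w; have h2 := xop_x j j w; have h3 := xop_y j j w
  have h4 := xop_l j w
  unfold Xop at h1 h2 h3 h4
  rw [h1, h2, h3, h4]
  simp [Pi.single_eq_same]
  ring

lemma yop_B (j : Fin N) (w : H N) :
    Yop N j (Bfun N j) w = zsq N w + 2 * (w.1 j) ^ 2 + 2 * (w.2.1 j) ^ 2 := by
  unfold Yop Bfun
  have : (fun w : H N => zsq N w * w.2.1 j - w.2.2 * w.1 j)
      = (fun w : H N => zsq N w * w.2.1 j + (-1 * (w.2.2 * w.1 j))) := by
    funext w; ring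
  rw [this, pd_add ((diff_zsq w).fun_mul (diff_y j w))
      (((diff_l w).fun_mul (diff_x j w)).const_mul (-1)),
    pd_mul (diff_zsq w) (diff_y j w),
    pd_const_mul ((diff_l w).fun_mul (diff_x j w)) (-1),
    pd_mul (diff_l w) (diff_x j w)]
  have h1 := yop_zsq j w; have h2 := yop_x j j w; have h3 := yop_y j j w
  have h4 := yop_l j w
  unfold Yop at h1 h2 h3 h4
  rw [h1, h2, h3, h4]
  simp [Pi.single_eq_same]
  ring

lemma xop_s (ε : ℝ) (j : Fin N) (w : H N) :
    Xop N j (sfun N ε) w = 4 * Afun N j w := by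
  unfold Xop sfun
  rw [pd_add ((diff_zsq.fun_pow 2 w).fun_add (diff_l.fun_pow 2 w)) (differentiableAt_const ε),
    pd_add (diff_zsq.fun_pow 2 w) (diff_l.fun_pow 2 w), pd_sq (diff_zsq w), pd_sq (diff_l w),
    fderiv_fun_const]
  have h1 := xop_zsq j w; have h4 := xop_l j w
  unfold Xop at h1 h4
  rw [h1, h4]
  simp [Afun]
  ring

lemma yop_s (ε : ℝ) (j : Fin N) (w : H N) :
    Yop N j (sfun N ε) w = 4 * Bfun N j w := by
  unfold Yop sfun
  rw [pd_add ((diff_zsq.fun_pow 2 w).fun_add (diff_l.fun_pow 2 w)) (differentiableAt_const ε),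
    pd_add (diff_zsq.fun_pow 2 w) (diff_l.fun_pow 2 w), pd_sq (diff_zsq w), pd_sq (diff_l w),
    fderiv_fun_const]
  have h1 := yop_zsq j w; have h4 := yop_l j w
  unfold Yop at h1 h4
  rw [h1, h4]
  simp [Bfun]
  ring

lemma xop_F {ε : ℝ} (hε : 0 < ε) (j : Fin N) (w : H N) :
    Xop N j (Ffun N ε j) w =
      -(N:ℝ) * (zsq N w + 2 * (w.1 j) ^ 2 + 2 * (w.2.1 j) ^ 2) * (sfun N ε w)⁻¹
      + (-(N:ℝ) * Afun N j w) * (-(4 * Afun N j w) / (sfun N ε w) ^ 2) := by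
  unfold Ffun Xop
  rw [pd_mul ((diff_A j w).const_mul _) ((diff_s ε w).fun_inv (sfun_pos hε w).ne'),
    pd_inv (diff_s ε w) (sfun_pos hε w).ne',
    pd_const_mul (diff_A j w)]
  have h1 := xop_A j w; have h2 := xop_s ε j w
  unfold Xop at h1 h2
  rw [h1, h2]
  ring

lemma yop_G {ε : ℝ} (hε : 0 < ε) (j : Fin N) (w : H N) :
    Yop N j (Gfun N ε j) w =
      -(N:ℝ) * (zsq N w + 2 * (w.1 j) ^ 2 + 2 * (w.2.1 j) ^ 2) * (sfun N ε w)⁻¹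
      + (-(N:ℝ) * Bfun N j w) * (-(4 * Bfun N j w) / (sfun N ε w) ^ 2) := by
  unfold Gfun Yop
  rw [pd_mul ((diff_B j w).const_mul _) ((diff_s ε w).fun_inv (sfun_pos hε w).ne'),
    pd_inv (diff_s ε w) (sfun_pos hε w).ne',
    pd_const_mul (diff_B j w)]
  have h1 := yop_B j w; have h2 := yop_s ε j w
  unfold Yop at h1 h2
  rw [h1, h2]
  ring

end comps

section ptwise
variable {N : ℕ}

lemma zsq_nonneg (w : H N) : 0 ≤ zsq N w := by
  unfold zsq; positivity

lemma per_x {ε : ℝ} (hε : 0 < ε) (j : Fin N) (w : H N) :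
    -(Xop N j (Ffun N ε j) w) - (Ffun N ε j w) ^ 2 =
      ((N:ℝ) * (zsq N w + 2 * (w.1 j) ^ 2 + 2 * (w.2.1 j) ^ 2) * sfun N ε w
        - (4 * N + N ^ 2) * (Afun N j w) ^ 2) / (sfun N ε w) ^ 2 := by
  have hs := (sfun_pos hε w).ne'
  rw [xop_F hε]
  unfold Ffun
  field_simp
  ring

lemma per_y {ε : ℝ} (hε : 0 < ε) (j : Fin N) (w : H N) :
    -(Yop N j (Gfun N ε j) w) - (Gfun N ε j w) ^ 2 =
      ((N:ℝ) * (zsq N w + 2 * (w.1 j) ^ 2 + 2 * (w.2.1 j) ^ 2) * sfun N ε w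
        - (4 * N + N ^ 2) * (Bfun N j w) ^ 2) / (sfun N ε w) ^ 2 := by
  have hs := (sfun_pos hε w).ne'
  rw [yop_G hε]
  unfold Gfun
  field_simp
  ring

lemma sum_AB (w : H N) :
    ∑ j, ((Afun N j w) ^ 2 + (Bfun N j w) ^ 2)
      = ((zsq N w) ^ 2 + (w.2.2) ^ 2) * zsq N w := by
  have h : ∀ j : Fin N, (Afun N j w) ^ 2 + (Bfun N j w) ^ 2
      = ((zsq N w) ^ 2 + (w.2.2) ^ 2) * ((w.1 j) ^ 2 + (w.2.1 j) ^ 2) := by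
    intro j; unfold Afun Bfun; ring
  rw [Finset.sum_congr rfl fun j _ => h j, ← Finset.mul_sum]
  congr 1
  unfold zsq
  rw [← Finset.sum_add_distrib]

lemma sum_W {ε : ℝ} (hε : 0 < ε) (w : H N) :
    (N:ℝ) ^ 2 * (zsq N w / sfun N ε w)
      ≤ ∑ j, (-(Xop N j (Ffun N ε j) w) - (Ffun N ε j w) ^ 2)
        + ∑ j, (-(Yop N j (Gfun N ε j) w) - (Gfun N ε j w) ^ 2) := by
  have hs := sfun_pos hε w
  have hq := zsq_nonneg w
  rw [Finset.sum_congr rfl fun j _ => per_x hε j w,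
    Finset.sum_congr rfl fun j _ => per_y hε j w,
    ← Finset.sum_div, ← Finset.sum_div, ← add_div, ← Finset.sum_add_distrib]
  have hnum : ∑ j, (((N:ℝ) * (zsq N w + 2 * (w.1 j) ^ 2 + 2 * (w.2.1 j) ^ 2) * sfun N ε w
        - (4 * N + N ^ 2) * (Afun N j w) ^ 2)
      + ((N:ℝ) * (zsq N w + 2 * (w.1 j) ^ 2 + 2 * (w.2.1 j) ^ 2) * sfun N ε w
        - (4 * N + N ^ 2) * (Bfun N j w) ^ 2))
      = 2 * N * (N + 2) * zsq N w * sfun N ε w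
        - (4 * N + N ^ 2) * (((zsq N w) ^ 2 + (w.2.2) ^ 2) * zsq N w) := by
    have h : ∀ j : Fin N, (((N:ℝ) * (zsq N w + 2 * (w.1 j) ^ 2 + 2 * (w.2.1 j) ^ 2) * sfun N ε w
        - (4 * N + N ^ 2) * (Afun N j w) ^ 2)
      + ((N:ℝ) * (zsq N w + 2 * (w.1 j) ^ 2 + 2 * (w.2.1 j) ^ 2) * sfun N ε w
        - (4 * N + N ^ 2) * (Bfun N j w) ^ 2))
      = 2 * (N:ℝ) * sfun N ε w * zsq N w
        + 4 * (N:ℝ) * sfun N ε w * ((w.1 j) ^ 2 + (w.2.1 j) ^ 2)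
        - (4 * N + N ^ 2) * ((Afun N j w) ^ 2 + (Bfun N j w) ^ 2) := by
      intro j; ring
    rw [Finset.sum_congr rfl fun j _ => h j]
    rw [Finset.sum_sub_distrib, Finset.sum_add_distrib, ← Finset.mul_sum, ← Finset.mul_sum,
      ← Finset.mul_sum, sum_AB]
    have hzz : ∑ j : Fin N, ((w.1 j) ^ 2 + (w.2.1 j) ^ 2) = zsq N w := by
      unfold zsq; rw [← Finset.sum_add_distrib]
    rw [hzz]
    simp [Finset.card_univ]
    ring
  rw [hnum]
  have hsub : (zsq N w) ^ 2 + (w.2.2) ^ 2 = sfun N ε w - ε := by unfold sfun; ring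
  rw [hsub, show (N:ℝ) ^ 2 * (zsq N w / sfun N ε w) = (N:ℝ)^2 * zsq N w / sfun N ε w from by ring, div_le_div_iff₀ hs (by positivity)]
  have h1 : 0 ≤ zsq N w * ε * sfun N ε w := by positivity
  nlinarith [sq_nonneg (sfun N ε w), mul_pos hs hs, mul_nonneg (mul_nonneg hq hε.le) hs.le,
    mul_nonneg hq hs.le]
end ptwise

section ibp
variable {N : ℕ}

instance (N : ℕ) : (volume : Measure ((Fin N → ℝ) × ℝ)).IsAddHaarMeasure :=
  (inferInstance : ((volume : Measure (Fin N → ℝ)).prod (volume : Measure ℝ)).IsAddHaarMeasure)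

instance (N : ℕ) : (volume : Measure (H N)).IsAddHaarMeasure :=
  (Measure.prod.instIsAddHaarMeasure _ _ :
    ((volume : Measure (Fin N → ℝ)).prod
      (volume : Measure ((Fin N → ℝ) × ℝ))).IsAddHaarMeasure)

lemma cont_coord_y (j : Fin N) : Continuous (fun w : H N => w.2.1 j) :=
  (continuous_apply j).comp (continuous_fst.comp continuous_snd)
lemma cont_coord_x (j : Fin N) : Continuous (fun w : H N => w.1 j) :=
  (continuous_apply j).comp continuous_fst
lemma cont_coord_l : Continuous (fun w : H N => w.2.2) :=
  continuous_snd.comp continuous_snd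

lemma cont_pdv {f : H N → ℝ} (hf : ContDiff ℝ (⊤ : ℕ∞) f) {V : H N → H N}
    (hV : Continuous V) : Continuous (fun w => fderiv ℝ f w (V w)) :=
  (hf.continuous_fderiv (by simp)).clm_apply hV

lemma supp_pdv {f : H N → ℝ} (hc : HasCompactSupport f) (V : H N → H N) :
    HasCompactSupport (fun w => fderiv ℝ f w (V w)) := by
  apply hc.mono'
  intro w hw
  have : fderiv ℝ f w ≠ 0 := by
    intro h; apply hw; simp [h]
  exact support_fderiv_subset ℝ this

lemma integrable_pdv {f : H N → ℝ} (hf : ContDiff ℝ (⊤ : ℕ∞) f)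
    (hc : HasCompactSupport f) {V : H N → H N} (hV : Continuous V) :
    Integrable (fun w : H N => fderiv ℝ f w (V w)) :=
  (cont_pdv hf hV).integrable_of_hasCompactSupport (supp_pdv hc V)

lemma diff_of_top {f : H N → ℝ} (hf : ContDiff ℝ (⊤ : ℕ∞) f) : Differentiable ℝ f :=
  hf.differentiable (by simp)

lemma integral_pd_zero (v : H N) {f : H N → ℝ} (hf : ContDiff ℝ (⊤ : ℕ∞) f)
    (hc : HasCompactSupport f) : ∫ w : H N, fderiv ℝ f w v = 0 := by
  have hzero : (fun x : H N => f x * fderiv ℝ (fun _ : H N => (1:ℝ)) x v) = fun _ => 0 := by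
    funext x
    simp [fderiv_const]
  have h := integral_mul_fderiv_eq_neg_fderiv_mul_of_integrable
    (μ := (volume : Measure (H N))) (f := f) (g := fun _ => (1 : ℝ)) (v := v)
    (by simpa using integrable_pdv hf hc (continuous_const (y := v)))
    (by rw [hzero]; exact integrable_zero _ _ _)
    (by simpa using hf.continuous.integrable_of_hasCompactSupport hc)
    (fun x _ => diff_of_top hf x) (fun x _ => differentiableAt_const _)
  rw [hzero, integral_zero] at h
  have h2 : ∫ w : H N, fderiv ℝ f w v * 1 = 0 := by
    rw [← neg_eq_zero, ← h]
  simpa using h2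

lemma Xvec_decomp (j : Fin N) (w : H N) :
    Xvec N j w = ((Pi.single j 1, 0, 0) : H N) + (2 * w.2.1 j) • ((0, 0, 1) : H N) := by
  unfold Xvec
  ext <;> simp

lemma Yvec_decomp (j : Fin N) (w : H N) :
    Yvec N j w = ((0, Pi.single j 1, 0) : H N) + (-2 * w.1 j) • ((0, 0, 1) : H N) := by
  unfold Yvec
  ext <;> simp

lemma integral_Xop_zero (j : Fin N) {f : H N → ℝ} (hf : ContDiff ℝ (⊤ : ℕ∞) f)
    (hc : HasCompactSupport f) : ∫ w : H N, Xop N j f w = 0 := by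
  set g : H N → ℝ := fun w => 2 * w.2.1 j * f w with hg
  have hgc : ContDiff ℝ (⊤ : ℕ∞) g :=
    (contDiff_const.mul (clmy N j).contDiff).mul hf
  have hgsupp : HasCompactSupport g := hc.mul_left
  have key : ∀ w : H N, Xop N j f w =
      fderiv ℝ f w ((Pi.single j 1, 0, 0) : H N) + fderiv ℝ g w ((0, 0, 1) : H N) := by
    intro w
    have h1 : fderiv ℝ g w ((0, 0, 1) : H N)
        = 2 * w.2.1 j * fderiv ℝ f w ((0, 0, 1) : H N) := by
      rw [hg]
      rw [pd_mul (((diff_y j).const_mul 2) w) (diff_of_top hf w),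
        pd_const_mul (diff_y j w) 2, pd_y]
      simp
    rw [h1]
    unfold Xop
    rw [Xvec_decomp, map_add, ContinuousLinearMap.map_smul]
    simp [smul_eq_mul]
  rw [integral_congr_ae (Filter.Eventually.of_forall key)]
  rw [integral_add (integrable_pdv hf hc continuous_const)
    (integrable_pdv hgc hgsupp continuous_const)]
  rw [integral_pd_zero _ hf hc, integral_pd_zero _ hgc hgsupp]
  norm_num

lemma integral_Yop_zero (j : Fin N) {f : H N → ℝ} (hf : ContDiff ℝ (⊤ : ℕ∞) f)
    (hc : HasCompactSupport f) : ∫ w : H N, Yop N j f w = 0 := by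
  set g : H N → ℝ := fun w => -2 * w.1 j * f w with hg
  have hgc : ContDiff ℝ (⊤ : ℕ∞) g :=
    (contDiff_const.mul (clmx N j).contDiff).mul hf
  have hgsupp : HasCompactSupport g := hc.mul_left
  have key : ∀ w : H N, Yop N j f w =
      fderiv ℝ f w ((0, Pi.single j 1, 0) : H N) + fderiv ℝ g w ((0, 0, 1) : H N) := by
    intro w
    have h1 : fderiv ℝ g w ((0, 0, 1) : H N)
        = -2 * w.1 j * fderiv ℝ f w ((0, 0, 1) : H N) := by
      rw [hg]
      rw [pd_mul (((diff_x j).const_mul (-2)) w) (diff_of_top hf w),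
        pd_const_mul (diff_x j w) (-2), pd_x]
      simp
    rw [h1]
    unfold Yop
    rw [Yvec_decomp, map_add, ContinuousLinearMap.map_smul]
    simp [smul_eq_mul]
  rw [integral_congr_ae (Filter.Eventually.of_forall key)]
  rw [integral_add (integrable_pdv hf hc continuous_const)
    (integrable_pdv hgc hgsupp continuous_const)]
  rw [integral_pd_zero _ hf hc, integral_pd_zero _ hgc hgsupp]
  norm_num

end ibp

section eps
variable {N : ℕ}

lemma contDiff_zsq : ContDiff ℝ (⊤ : ℕ∞) (zsq N) := by
  unfold zsq
  apply ContDiff.add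
  · exact ContDiff.sum fun i _ => (clmx N i).contDiff.pow 2
  · exact ContDiff.sum fun i _ => (clmy N i).contDiff.pow 2

lemma contDiff_l : ContDiff ℝ (⊤ : ℕ∞) (fun w : H N => w.2.2) := (clml N).contDiff

lemma contDiff_A (j : Fin N) : ContDiff ℝ (⊤ : ℕ∞) (Afun N j) :=
  (contDiff_zsq.mul (clmx N j).contDiff).add (contDiff_l.mul (clmy N j).contDiff)
lemma contDiff_B (j : Fin N) : ContDiff ℝ (⊤ : ℕ∞) (Bfun N j) :=
  (contDiff_zsq.mul (clmy N j).contDiff).sub (contDiff_l.mul (clmx N j).contDiff)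
lemma contDiff_s (ε : ℝ) : ContDiff ℝ (⊤ : ℕ∞) (sfun N ε) :=
  ((contDiff_zsq.pow 2).add (contDiff_l.pow 2)).add contDiff_const

lemma contDiff_F {ε : ℝ} (hε : 0 < ε) (j : Fin N) : ContDiff ℝ (⊤ : ℕ∞) (Ffun N ε j) :=
  (contDiff_const.mul (contDiff_A j)).mul
    ((contDiff_s ε).inv fun w => (sfun_pos hε w).ne')
lemma contDiff_G {ε : ℝ} (hε : 0 < ε) (j : Fin N) : ContDiff ℝ (⊤ : ℕ∞) (Gfun N ε j) :=
  (contDiff_const.mul (contDiff_B j)).mul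
    ((contDiff_s ε).inv fun w => (sfun_pos hε w).ne')

lemma cont_Xvec (j : Fin N) : Continuous (Xvec N j) := by
  unfold Xvec
  exact continuous_const.prodMk (continuous_const.prodMk (continuous_const.mul (cont_coord_y j)))

lemma cont_Yvec (j : Fin N) : Continuous (Yvec N j) := by
  unfold Yvec
  exact continuous_const.prodMk (continuous_const.prodMk (continuous_const.mul (cont_coord_x j)))

variable {u : H N → ℝ} (hu : ContDiff ℝ (⊤ : ℕ∞) u) (hsupp : HasCompactSupport u)

include hu hsupp

lemma contDiff_Fu2 {ε : ℝ} (hε : 0 < ε) (j : Fin N) :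
    ContDiff ℝ (⊤ : ℕ∞) (fun w => Ffun N ε j w * (u w) ^ 2) :=
  (contDiff_F hε j).mul (hu.pow 2)
lemma contDiff_Gu2 {ε : ℝ} (hε : 0 < ε) (j : Fin N) :
    ContDiff ℝ (⊤ : ℕ∞) (fun w => Gfun N ε j w * (u w) ^ 2) :=
  (contDiff_G hε j).mul (hu.pow 2)

lemma supp_Fu2 (Ff : H N → ℝ) :
    HasCompactSupport (fun w => Ff w * (u w) ^ 2) := by
  apply hsupp.mono'
  intro w hw
  apply subset_closure
  intro h0
  apply hw
  simp only [Function.mem_support, ne_eq, not_not] at h0 ⊢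
  simp [h0]


lemma integrable_Xop_term {ε : ℝ} (hε : 0 < ε) (j : Fin N) :
    Integrable (fun w : H N => Xop N j (fun w => Ffun N ε j w * (u w) ^ 2) w) := by
  unfold Xop
  exact integrable_pdv (contDiff_Fu2 hu hsupp hε j) (supp_Fu2 hu hsupp _) (cont_Xvec j)

lemma integrable_Yop_term {ε : ℝ} (hε : 0 < ε) (j : Fin N) :
    Integrable (fun w : H N => Yop N j (fun w => Gfun N ε j w * (u w) ^ 2) w) := by
  unfold Yop
  exact integrable_pdv (contDiff_Gu2 hu hsupp hε j) (supp_Fu2 hu hsupp _) (cont_Yvec j)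

lemma integrable_D {ε : ℝ} (hε : 0 < ε) :
    Integrable (fun w : H N =>
      ∑ j, Xop N j (fun w => Ffun N ε j w * (u w) ^ 2) w
      + ∑ j, Yop N j (fun w => Gfun N ε j w * (u w) ^ 2) w) :=
  (integrable_finset_sum _ fun j _ => integrable_Xop_term hu hsupp hε j).add
    (integrable_finset_sum _ fun j _ => integrable_Yop_term hu hsupp hε j)

lemma integral_D_zero {ε : ℝ} (hε : 0 < ε) :
    ∫ w : H N, (∑ j, Xop N j (fun w => Ffun N ε j w * (u w) ^ 2) w
      + ∑ j, Yop N j (fun w => Gfun N ε j w * (u w) ^ 2) w) = 0 := by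
  rw [integral_add (integrable_finset_sum _ fun j _ => integrable_Xop_term hu hsupp hε j)
    (integrable_finset_sum _ fun j _ => integrable_Yop_term hu hsupp hε j),
    integral_finset_sum _ fun j _ => integrable_Xop_term hu hsupp hε j,
    integral_finset_sum _ fun j _ => integrable_Yop_term hu hsupp hε j]
  have h1 : ∀ j : Fin N, ∫ w : H N, Xop N j (fun w => Ffun N ε j w * (u w) ^ 2) w = 0 :=
    fun j => integral_Xop_zero j (contDiff_Fu2 hu hsupp hε j) (supp_Fu2 hu hsupp _)
  have h2 : ∀ j : Fin N, ∫ w : H N, Yop N j (fun w => Gfun N ε j w * (u w) ^ 2) w = 0 :=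
    fun j => integral_Yop_zero j (contDiff_Gu2 hu hsupp hε j) (supp_Fu2 hu hsupp _)
  simp [h1, h2]

lemma pointwise_bound {ε : ℝ} (hε : 0 < ε) (w : H N) :
    (N:ℝ) ^ 2 * (zsq N w / sfun N ε w) * (u w) ^ 2
      ≤ gradHsq N u w
        - (∑ j, Xop N j (fun w => Ffun N ε j w * (u w) ^ 2) w
          + ∑ j, Yop N j (fun w => Gfun N ε j w * (u w) ^ 2) w) := by
  have hXj : ∀ j : Fin N, Xop N j (fun w => Ffun N ε j w * (u w) ^ 2) w
      + (u w) ^ 2 * (-(Xop N j (Ffun N ε j) w) - (Ffun N ε j w) ^ 2)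
      ≤ (Xop N j u w) ^ 2 := by
    intro j
    have e1 : Xop N j (fun w => Ffun N ε j w * (u w) ^ 2) w
        = Ffun N ε j w * (2 * u w * Xop N j u w) + (u w) ^ 2 * Xop N j (Ffun N ε j) w := by
      unfold Xop
      rw [pd_mul (diff_F hε j w) ((diff_of_top hu w).fun_pow 2), pd_sq (diff_of_top hu w)]
    have e2 : 2 * (Ffun N ε j w * u w) * Xop N j u w
        ≤ (Xop N j u w) ^ 2 + (Ffun N ε j w * u w) ^ 2 := by
      nlinarith [sq_nonneg (Xop N j u w - Ffun N ε j w * u w)]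
    nlinarith [e2]
  have hYj : ∀ j : Fin N, Yop N j (fun w => Gfun N ε j w * (u w) ^ 2) w
      + (u w) ^ 2 * (-(Yop N j (Gfun N ε j) w) - (Gfun N ε j w) ^ 2)
      ≤ (Yop N j u w) ^ 2 := by
    intro j
    have e1 : Yop N j (fun w => Gfun N ε j w * (u w) ^ 2) w
        = Gfun N ε j w * (2 * u w * Yop N j u w) + (u w) ^ 2 * Yop N j (Gfun N ε j) w := by
      unfold Yop
      rw [pd_mul (diff_G hε j w) ((diff_of_top hu w).fun_pow 2), pd_sq (diff_of_top hu w)]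
    have e2 : 2 * (Gfun N ε j w * u w) * Yop N j u w
        ≤ (Yop N j u w) ^ 2 + (Gfun N ε j w * u w) ^ 2 := by
      nlinarith [sq_nonneg (Yop N j u w - Gfun N ε j w * u w)]
    nlinarith [e2]
  have hsumX := Finset.sum_le_sum (fun j (_ : j ∈ Finset.univ) => hXj j)
  have hsumY := Finset.sum_le_sum (fun j (_ : j ∈ Finset.univ) => hYj j)
  rw [Finset.sum_add_distrib] at hsumX hsumY
  rw [← Finset.mul_sum] at hsumX hsumY
  have hW := sum_W hε w
  have hu2 : (0:ℝ) ≤ (u w) ^ 2 := sq_nonneg _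
  have hW2 : (N:ℝ) ^ 2 * (zsq N w / sfun N ε w) * (u w) ^ 2
      ≤ ((∑ j, (-(Xop N j (Ffun N ε j) w) - (Ffun N ε j w) ^ 2))
        + (∑ j, (-(Yop N j (Gfun N ε j) w) - (Gfun N ε j w) ^ 2))) * (u w) ^ 2 := by
    exact mul_le_mul_of_nonneg_right hW hu2
  unfold gradHsq
  nlinarith [hsumX, hsumY, hW2]

lemma cont_gradHsq : Continuous (gradHsq N u) := by
  unfold gradHsq Xop Yop
  exact (continuous_finset_sum _ fun j _ => (cont_pdv hu (cont_Xvec j)).pow 2).add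
    (continuous_finset_sum _ fun j _ => (cont_pdv hu (cont_Yvec j)).pow 2)

lemma supp_gradHsq : HasCompactSupport (gradHsq N u) := by
  apply hsupp.mono'
  intro w hw
  by_contra h
  have hfd : fderiv ℝ u w = 0 := by
    by_contra h2
    exact h (support_fderiv_subset ℝ h2)
  exact hw (by simp [gradHsq, Xop, Yop, hfd])

lemma integrable_gradHsq : Integrable (gradHsq N u) :=
  (cont_gradHsq hu hsupp).integrable_of_hasCompactSupport (supp_gradHsq hu hsupp)

lemma cont_R {ε : ℝ} (hε : 0 < ε) :
    Continuous (fun w : H N => (N:ℝ) ^ 2 * (zsq N w / sfun N ε w) * (u w) ^ 2) := by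
  apply Continuous.mul _ (hu.continuous.pow 2)
  apply Continuous.mul continuous_const
  exact (contDiff_zsq.continuous).div (contDiff_s ε).continuous fun w => (sfun_pos hε w).ne'

lemma integrable_R {ε : ℝ} (hε : 0 < ε) :
    Integrable (fun w : H N => (N:ℝ) ^ 2 * (zsq N w / sfun N ε w) * (u w) ^ 2) := by
  apply (cont_R hu hsupp hε).integrable_of_hasCompactSupport
  apply hsupp.mono'
  intro w hw
  apply subset_closure
  intro h0
  apply hw
  simp only [Function.mem_support, ne_eq, not_not] at h0 ⊢
  simp [h0]

lemma cont_R0 {ε : ℝ} (hε : 0 < ε) :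
    Continuous (fun w : H N => zsq N w / sfun N ε w * (u w) ^ 2) := by
  apply Continuous.mul _ (hu.continuous.pow 2)
  exact (contDiff_zsq.continuous).div (contDiff_s ε).continuous fun w => (sfun_pos hε w).ne'

lemma integrable_R0 {ε : ℝ} (hε : 0 < ε) :
    Integrable (fun w : H N => zsq N w / sfun N ε w * (u w) ^ 2) := by
  apply (cont_R0 hu hsupp hε).integrable_of_hasCompactSupport
  apply hsupp.mono'
  intro w hw
  apply subset_closure
  intro h0
  apply hw
  simp only [Function.mem_support, ne_eq, not_not] at h0 ⊢
  simp [h0]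

lemma main_eps {ε : ℝ} (hε : 0 < ε) :
    ∫ w : H N, (N:ℝ) ^ 2 * (zsq N w / sfun N ε w) * (u w) ^ 2
      ≤ ∫ w : H N, gradHsq N u w := by
  have h1 : ∫ w : H N, (N:ℝ) ^ 2 * (zsq N w / sfun N ε w) * (u w) ^ 2
      ≤ ∫ w : H N, (gradHsq N u w
        - (∑ j, Xop N j (fun w => Ffun N ε j w * (u w) ^ 2) w
          + ∑ j, Yop N j (fun w => Gfun N ε j w * (u w) ^ 2) w)) := by
    apply integral_mono (integrable_R hu hsupp hε)
      ((integrable_gradHsq hu hsupp).sub (integrable_D hu hsupp hε))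
    exact fun w => pointwise_bound hu hsupp hε w
  rwa [integral_sub (integrable_gradHsq hu hsupp) (integrable_D hu hsupp hε),
    integral_D_zero hu hsupp hε, sub_zero] at h1

end eps

theorem stmt_11 (N : ℕ) (hN : 1 ≤ N) (u : H N → ℝ)
    (hu : ContDiff ℝ (⊤ : ℕ∞) u) (hsupp : HasCompactSupport u) :
    (N : ENNReal) ^ 2 *
        ∫⁻ w : H N,
          ENNReal.ofReal ((zsq N w / ((zsq N w) ^ 2 + (w.2.2) ^ 2)) * (u w) ^ 2)
      ≤ ∫⁻ w : H N, ENNReal.ofReal (gradHsq N u w) := by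
  classical
  have hεn : ∀ n : ℕ, (0:ℝ) < 1 / (n + 1) := fun n => by positivity
  set fseq : ℕ → H N → ENNReal :=
    fun n w => ENNReal.ofReal (zsq N w / sfun N (1 / (n + 1)) w * (u w) ^ 2) with hfseq
  have hmono : ∀ w, Monotone fun n => fseq n w := by
    intro w n m hnm
    apply ENNReal.ofReal_le_ofReal
    apply mul_le_mul_of_nonneg_right _ (sq_nonneg _)
    apply div_le_div_of_nonneg_left (zsq_nonneg w) (sfun_pos (hεn m) w)
    have h1 : (1:ℝ) / (m + 1) ≤ 1 / (n + 1) := by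
      apply one_div_le_one_div_of_le (by positivity)
      have : (n:ℝ) ≤ m := by exact_mod_cast hnm
      linarith
    unfold sfun
    linarith
  have hsup : ∀ w, (⨆ n, fseq n w)
      = ENNReal.ofReal ((zsq N w / ((zsq N w) ^ 2 + (w.2.2) ^ 2)) * (u w) ^ 2) := by
    intro w
    rcases eq_or_lt_of_le (show (0:ℝ) ≤ (zsq N w) ^ 2 + (w.2.2) ^ 2 by positivity) with hd | hd
    · have h1 : (zsq N w) ^ 2 = 0 := by nlinarith [sq_nonneg (zsq N w), sq_nonneg w.2.2]
      have hq : zsq N w = 0 := by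
        exact pow_eq_zero_iff (by norm_num) |>.mp h1
      simp [hfseq, hq, sfun]
    · have hden : Filter.Tendsto (fun n : ℕ => sfun N (1 / (n + 1)) w) Filter.atTop
          (nhds ((zsq N w) ^ 2 + (w.2.2) ^ 2)) := by
        have := tendsto_one_div_add_atTop_nhds_zero_nat (𝕜 := ℝ)
        have h2 := Filter.Tendsto.add
          (tendsto_const_nhds (x := (zsq N w) ^ 2 + (w.2.2) ^ 2) (f := Filter.atTop (α := ℕ)))
          this
        simpa [sfun] using h2
      have h1 : Filter.Tendsto (fun n : ℕ => zsq N w / sfun N (1 / (n + 1)) w * (u w) ^ 2)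
          Filter.atTop (nhds (zsq N w / ((zsq N w) ^ 2 + (w.2.2) ^ 2) * (u w) ^ 2)) :=
        (Filter.Tendsto.div tendsto_const_nhds hden hd.ne').mul_const _
      have h2 : Filter.Tendsto (fun n => fseq n w) Filter.atTop
          (nhds (ENNReal.ofReal (zsq N w / ((zsq N w) ^ 2 + (w.2.2) ^ 2) * (u w) ^ 2))) :=
        (ENNReal.continuous_ofReal.tendsto _).comp h1
      exact tendsto_nhds_unique (tendsto_atTop_iSup (hmono w)) h2
  have hmeas : ∀ n, Measurable (fseq n) := by
    intro n
    exact (cont_R0 hu hsupp (hεn n)).measurable.ennreal_ofReal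
  have hlin : ∫⁻ w : H N,
      ENNReal.ofReal ((zsq N w / ((zsq N w) ^ 2 + (w.2.2) ^ 2)) * (u w) ^ 2)
      = ⨆ n, ∫⁻ w : H N, fseq n w := by
    rw [← lintegral_iSup hmeas (fun n m hnm w => hmono w hnm)]
    exact lintegral_congr fun w => (hsup w).symm
  rw [hlin, ENNReal.mul_iSup]
  apply iSup_le
  intro n
  have hfn_nonneg : (fun _ : H N => (0:ℝ)) ≤ᵐ[volume] fun w : H N => zsq N w / sfun N (1/(n+1)) w * (u w) ^ 2 := by
    apply Filter.Eventually.of_forall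
    intro w
    have := zsq_nonneg w
    have := (sfun_pos (hεn n) w).le
    positivity
  have hofreal := ofReal_integral_eq_lintegral_ofReal (integrable_R0 hu hsupp (hεn n)) hfn_nonneg
  have hcast : (N : ENNReal) ^ 2 = ENNReal.ofReal ((N:ℝ) ^ 2) := by
    rw [ENNReal.ofReal_pow (by positivity), ENNReal.ofReal_natCast]
  have hmul : ∫ w : H N, (N:ℝ) ^ 2 * (zsq N w / sfun N (1/(n+1)) w) * (u w) ^ 2
      = (N:ℝ) ^ 2 * ∫ w : H N, zsq N w / sfun N (1/(n+1)) w * (u w) ^ 2 := by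
    rw [← MeasureTheory.integral_const_mul]
    apply integral_congr_ae
    apply Filter.Eventually.of_forall
    intro w
    ring
  have hgrad_nonneg : (fun _ : H N => (0:ℝ)) ≤ᵐ[volume] gradHsq N u := by
    apply Filter.Eventually.of_forall
    intro w
    unfold gradHsq
    positivity
  have hgradeq := ofReal_integral_eq_lintegral_ofReal (integrable_gradHsq hu hsupp) hgrad_nonneg
  calc (N : ENNReal) ^ 2 * ∫⁻ w : H N, fseq n w
      = ENNReal.ofReal ((N:ℝ) ^ 2) *
          ENNReal.ofReal (∫ w : H N, zsq N w / sfun N (1/(n+1)) w * (u w) ^ 2) := by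
        rw [hcast, hfseq, hofreal]
    _ = ENNReal.ofReal ((N:ℝ) ^ 2 * ∫ w : H N, zsq N w / sfun N (1/(n+1)) w * (u w) ^ 2) :=
        (ENNReal.ofReal_mul (by positivity)).symm
    _ = ENNReal.ofReal (∫ w : H N, (N:ℝ) ^ 2 * (zsq N w / sfun N (1/(n+1)) w) * (u w) ^ 2) := by
        rw [hmul]
    _ ≤ ENNReal.ofReal (∫ w : H N, gradHsq N u w) :=
        ENNReal.ofReal_le_ofReal (main_eps hu hsupp (hεn n))
    _ = ∫⁻ w : H N, ENNReal.ofReal (gradHsq N u w) := hgradeq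
end
end
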